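/- arXiv:1712.01503 — 7 statements merged into one kernel-verified Lean document; each statement's English description precedes it below -/
import Mathlib

section
/- For any graph G with a non-empty edge set, the spectral radius of the adjacency matrix satisfies μ(G) ≥ min{√(d(u)·d(v)) : uv ∈ E(G)}. -/
open Finset Matrix RealInnerProductSpace

/-- Spectral radius (largest eigenvalue) of the adjacency matrix of `G`. -/
noncomputable def specRad {V : Type*} [Fintype V] [DecidableEq V] (G : SimpleGraph V) : ℝ :=
  letI : DecidableRel G.Adj := Classical.decRel _
  sSup (spectrum ℝ (G.adjMatrix ℝ))

/-- Degree of a vertex, via `Set.ncard` (no decidability needed). -/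
noncomputable def deg {V : Type*} (G : SimpleGraph V) (v : V) : ℕ :=
  (G.neighborSet v).ncard

/-- One step of the `k`-closure: add one edge between nonadjacent vertices
with degree sum at least `k`. -/
def ClosureStep {V : Type*} (k : ℕ) (G H : SimpleGraph V) : Prop :=
  ∃ u v : V, u ≠ v ∧ ¬ G.Adj u v ∧ k ≤ deg G u + deg G v ∧
    H = G ⊔ SimpleGraph.fromEdgeSet {s(u, v)}

/-- No pair of nonadjacent vertices has degree sum at least `k`. -/
def IsKClosed {V : Type*} (k : ℕ) (H : SimpleGraph V) : Prop :=
  ∀ u v : V, u ≠ v → ¬ H.Adj u v → deg H u + deg H v < k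

/-- `H` is a `k`-closure of `G`. -/
def IsKClosure {V : Type*} (k : ℕ) (G H : SimpleGraph V) : Prop :=
  Relation.ReflTransGen (ClosureStep k) G H ∧ IsKClosed k H

/-- `G` is `s`-connected: more than `s` vertices, and deleting fewer than `s`
vertices leaves a connected graph. -/
def SConnected {V : Type*} [Fintype V] (s : ℕ) (G : SimpleGraph V) : Prop :=
  s < Fintype.card V ∧
    ∀ S : Finset V, S.card < s → (G.induce ((↑S : Set V)ᶜ)).Connected

/-- `G` is `s`-edge-connected: at least two vertices, and deleting fewer than
`s` edges leaves a connected graph. -/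
def SEdgeConnected {V : Type*} [Fintype V] (s : ℕ) (G : SimpleGraph V) : Prop :=
  2 ≤ Fintype.card V ∧
    ∀ F : Finset (Sym2 V), ↑F ⊆ G.edgeSet → F.card < s →
      (G.deleteEdges ↑F).Connected

/-- `G` is `β`-deficient: some matching leaves at most `β` vertices unmatched. -/
def BetaDeficient {V : Type*} [Fintype V] (β : ℕ) (G : SimpleGraph V) : Prop :=
  ∃ M : G.Subgraph, M.IsMatching ∧ Fintype.card V ≤ M.verts.ncard + β

/-- `G` is `s`-path-coverable: the vertices are covered by at most `s`
vertex-disjoint paths. -/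
def SPathCoverable {V : Type*} (s : ℕ) (G : SimpleGraph V) : Prop :=
  ∃ m : ℕ, m ≤ s ∧ ∃ (a b : Fin m → V) (p : ∀ i, G.Walk (a i) (b i)),
    (∀ i, (p i).IsPath) ∧
    (∀ i j, i ≠ j → ∀ x, x ∈ (p i).support → x ∉ (p j).support) ∧
    (∀ x : V, ∃ i, x ∈ (p i).support)

/-- `G` is `s`-Hamiltonian: deleting any at most `s` vertices leaves a
Hamiltonian graph. -/
def SHamiltonian {V : Type*} [Fintype V] [DecidableEq V] (s : ℕ) (G : SimpleGraph V) : Prop :=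
  ∀ X : Finset V, X.card ≤ s → (G.induce ((↑X : Set V)ᶜ)).IsHamiltonian

/-- `G` is `s`-edge-Hamiltonian: any collection of vertex-disjoint paths with
at most `s` edges altogether is contained in a Hamiltonian cycle. -/
def SEdgeHamiltonian {V : Type*} [Fintype V] [DecidableEq V] (s : ℕ) (G : SimpleGraph V) : Prop :=
  ∀ (m : ℕ) (a b : Fin m → V) (p : ∀ i, G.Walk (a i) (b i)),
    (∀ i, (p i).IsPath) →
    (∀ i j, i ≠ j → ∀ x, x ∈ (p i).support → x ∉ (p j).support) →
    (∑ i, (p i).length) ≤ s →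
    ∃ (c : V) (w : G.Walk c c), w.IsHamiltonianCycle ∧
      ∀ i, ∀ e ∈ (p i).edges, e ∈ w.edges

/-- `G` is semi-regular bipartite: all edges go between `X` and its complement,
vertices in `X` all have degree `dX`, vertices outside `X` all have degree `dY`. -/
def IsSemiregularBipartite {V : Type*} (G : SimpleGraph V) : Prop :=
  ∃ (X : Set V) (dX dY : ℕ),
    (∀ u v, G.Adj u v → (u ∈ X ↔ v ∉ X)) ∧
    (∀ u ∈ X, deg G u = dX) ∧
    (∀ u ∉ X, deg G u = dY)

/-- `G ∈ EP_n`: `G = Ḡ₁ ∨ G₂` with `G₁` an `r`-regular graph of order `n-k+r`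
and `G₂` a spanning subgraph of `K_{k-r}` (equivalently: outside a set `S` of
`k-r` vertices the induced graph is `(n-k-1)`-regular, and all pairs between
`S` and its complement are joined). -/
def MemEP {V : Type*} [Fintype V] (n k : ℕ) (G : SimpleGraph V) : Prop :=
  ∃ (r : ℕ) (S : Finset V), r ≤ k ∧ S.card = k - r ∧
    (∀ a ∉ S, ∀ b ∈ S, G.Adj a b) ∧
    (∀ a ∉ S, ((G.neighborSet a) \ (↑S : Set V)).ncard = n - k - 1)

/-- `G ∈ EC_n`: `G = Ḡ₁ ∨ G₂` where `G₁ = (X,Y)` is semi-regular bipartite of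
order `n-s+1+r`, with degrees `k-s+2` on `X` and `n-k-1` on `Y`, and `G₂` is an
arbitrary graph on `s-1-r ≥ 0` vertices. -/
def MemEC {V : Type*} [Fintype V] [DecidableEq V] (n k s : ℕ) (G : SimpleGraph V) : Prop :=
  ∃ (r : ℕ) (X Y S : Finset V) (G₁ : SimpleGraph V),
    Disjoint X Y ∧ Disjoint X S ∧ Disjoint Y S ∧ X ∪ Y ∪ S = Finset.univ ∧
    ((S.card : ℤ) = (s : ℤ) - 1 - r) ∧
    ((X.card : ℤ) + Y.card = (n : ℤ) - s + 1 + r) ∧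
    (∀ u v, G₁.Adj u v → (u ∈ X ∧ v ∈ Y) ∨ (u ∈ Y ∧ v ∈ X)) ∧
    (∀ u ∈ X, ((deg G₁ u : ℤ) = (k : ℤ) - s + 2)) ∧
    (∀ v ∈ Y, ((deg G₁ v : ℤ) = (n : ℤ) - k - 1)) ∧
    (∀ a, a ∈ X ∪ Y → ∀ b ∈ S, G.Adj a b) ∧
    (∀ a ∈ X ∪ Y, ∀ b ∈ X ∪ Y, (G.Adj a b ↔ a ≠ b ∧ ¬ G₁.Adj a b))

/-- `G ∈ ES_n`: `G = Ḡ₁ ∨ G₂` where `G₁ = (X,Y)` is semi-regular bipartite of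
order `n-s-1+r`, with degrees `k-s` on `X` and `n-k-1` on `Y`, and `G₂` is an
arbitrary graph on `s+1-r ≥ 0` vertices. -/
def MemES {V : Type*} [Fintype V] [DecidableEq V] (n k s : ℕ) (G : SimpleGraph V) : Prop :=
  ∃ (r : ℕ) (X Y S : Finset V) (G₁ : SimpleGraph V),
    Disjoint X Y ∧ Disjoint X S ∧ Disjoint Y S ∧ X ∪ Y ∪ S = Finset.univ ∧
    ((S.card : ℤ) = (s : ℤ) + 1 - r) ∧
    ((X.card : ℤ) + Y.card = (n : ℤ) - s - 1 + r) ∧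
    (∀ u v, G₁.Adj u v → (u ∈ X ∧ v ∈ Y) ∨ (u ∈ Y ∧ v ∈ X)) ∧
    (∀ u ∈ X, ((deg G₁ u : ℤ) = (k : ℤ) - s)) ∧
    (∀ v ∈ Y, ((deg G₁ v : ℤ) = (n : ℤ) - k - 1)) ∧
    (∀ a, a ∈ X ∪ Y → ∀ b ∈ S, G.Adj a b) ∧
    (∀ a ∈ X ∪ Y, ∀ b ∈ X ∪ Y, (G.Adj a b ↔ a ≠ b ∧ ¬ G₁.Adj a b))

/-- `G = K_{k+1} + K_{n-k-1}`: the disjoint union of a clique on `k+1` vertices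
and a clique on the remaining vertices. -/
def IsCliquePlusClique {V : Type*} [Fintype V] (k : ℕ) (G : SimpleGraph V) : Prop :=
  ∃ S : Finset V, S.card = k + 1 ∧
    (∀ a ∈ S, ∀ b ∈ S, a ≠ b → G.Adj a b) ∧
    (∀ a ∉ S, ∀ b ∉ S, a ≠ b → G.Adj a b) ∧
    (∀ a ∈ S, ∀ b ∉ S, ¬ G.Adj a b)

/-- For any graph with a non-empty edge set, the spectral radius is at least
`min{√(d(u)·d(v)) : uv ∈ E(G)}`. -/
theorem stmt_0 {V : Type*} [Fintype V] [DecidableEq V] (G : SimpleGraph V)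
    (h : G.edgeSet.Nonempty) :
    sInf {x : ℝ | ∃ u v : V, G.Adj u v ∧ x = Real.sqrt ((deg G u : ℝ) * deg G v)} ≤
      specRad G := by
  letI : DecidableRel G.Adj := Classical.decRel _
  -- an edge
  obtain ⟨e, he⟩ := h
  induction e using Sym2.ind with
  | _ u₀ v₀ =>
  rw [SimpleGraph.mem_edgeSet] at he
  set S := {x : ℝ | ∃ u v : V, G.Adj u v ∧ x = Real.sqrt ((deg G u : ℝ) * deg G v)} with hSdef
  have hSne : S.Nonempty := ⟨_, u₀, v₀, he, rfl⟩
  have hSbd : BddBelow S := ⟨0, by rintro _ ⟨u, v, _, rfl⟩; positivity⟩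
  set c := sInf S with hcdef
  have hdeg : ∀ u : V, (deg G u : ℝ) = (G.degree u : ℝ) := by
    intro u
    have : deg G u = G.degree u := by
      rw [deg, SimpleGraph.degree, SimpleGraph.neighborFinset, Set.ncard_eq_toFinset_card']
    rw [this]
  have hc : ∀ u v : V, G.Adj u v →
      c ≤ Real.sqrt (G.degree u) * Real.sqrt (G.degree v) := by
    intro u v huv
    have := csInf_le hSbd (⟨u, v, huv, rfl⟩ : _ ∈ S)
    rwa [hdeg, hdeg, Real.sqrt_mul (by positivity)] at this
  -- the test vector
  set x : V → ℝ := fun v => Real.sqrt (G.degree v) with hxdef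
  have hxx : x ⬝ᵥ x = ∑ u : V, (G.degree u : ℝ) := by
    simp only [dotProduct, hxdef]
    refine Finset.sum_congr rfl fun u _ => ?_
    exact Real.mul_self_sqrt (by positivity)
  have hxxpos : 0 < x ⬝ᵥ x := by
    rw [hxx]
    refine Finset.sum_pos' (fun u _ => by positivity) ⟨u₀, Finset.mem_univ _, ?_⟩
    have : 0 < G.degree u₀ := by
      rw [SimpleGraph.degree_pos_iff_exists_adj]; exact ⟨v₀, he⟩
    exact_mod_cast this
  set A := G.adjMatrix ℝ with hAdef
  have hquad : c * (x ⬝ᵥ x) ≤ x ⬝ᵥ (A *ᵥ x) := by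
    rw [SimpleGraph.dotProduct_mulVec_adjMatrix, hxx]
    have : ∀ u : V, c * (G.degree u : ℝ) = ∑ v : V, (if G.Adj u v then c else 0) := by
      intro u
      rw [← Finset.sum_filter, ← SimpleGraph.neighborFinset_eq_filter, Finset.sum_const,
        SimpleGraph.card_neighborFinset_eq_degree]
      simp [mul_comm]
    rw [Finset.mul_sum]
    simp_rw [this]
    refine Finset.sum_le_sum fun u _ => Finset.sum_le_sum fun v _ => ?_
    by_cases huv : G.Adj u v
    · simpa [huv] using hc u v huv
    · simp [huv]
  -- Hermitian / symmetric
  have hA : A.IsHermitian := by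
    ext i j
    simp only [Matrix.conjTranspose_apply, star_trivial, hAdef, SimpleGraph.adjMatrix_apply]
    by_cases hji : G.Adj j i
    · simp [hji, hji.symm]
    · have hij : ¬ G.Adj i j := fun hh => hji hh.symm
      simp [hji, hij]
  have hT : (Matrix.toEuclideanLin A).IsSymmetric :=
    (Matrix.isHermitian_iff_isSymmetric).mp hA
  set T := Matrix.toEuclideanLin A with hTdef
  set y : EuclideanSpace ℝ V := (WithLp.equiv 2 (V → ℝ)).symm x with hydef
  have hTy : T y = (WithLp.equiv 2 (V → ℝ)).symm (A *ᵥ x) := by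
    rw [hTdef, Matrix.toEuclideanLin_apply]
    simp [hydef]
  have hinner : (inner ℝ (T y) y : ℝ) = x ⬝ᵥ (A *ᵥ x) := by
    rw [hTy]
    simp [PiLp.inner_apply, dotProduct, hydef, mul_comm]
  have hnorm : ‖y‖ ^ 2 = x ⬝ᵥ x := by
    rw [← real_inner_self_eq_norm_sq]
    rw [hydef, PiLp.inner_apply]
    simp [dotProduct, sq]
  have hy0 : y ≠ 0 := by
    intro h0
    rw [h0, norm_zero] at hnorm
    simp at hnorm
    linarith [hxxpos]
  haveI : Nonempty V := ⟨u₀⟩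
  haveI : Nontrivial (EuclideanSpace ℝ V) := ⟨y, 0, hy0⟩
  -- Rayleigh quotient bound
  have hray : c ≤ RCLike.re (inner ℝ (T y) y : ℝ) / ‖y‖ ^ 2 := by
    rw [RCLike.re_to_real, hinner, hnorm, le_div_iff₀ hxxpos]
    exact hquad
  -- boundedness of the Rayleigh quotients
  set T' := LinearMap.toContinuousLinearMap T with hT'def
  have hbdd : BddAbove (Set.range fun z : { z : EuclideanSpace ℝ V // z ≠ 0 } =>
      RCLike.re (inner ℝ (T z) (z : EuclideanSpace ℝ V) : ℝ) / ‖(z : EuclideanSpace ℝ V)‖ ^ 2) := by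
    refine ⟨‖T'‖, ?_⟩
    rintro _ ⟨⟨z, hz⟩, rfl⟩
    have hz0 : 0 < ‖z‖ ^ 2 := by
      have hzn : 0 < ‖z‖ := norm_pos_iff.mpr hz
      positivity
    dsimp only
    rw [RCLike.re_to_real, div_le_iff₀ hz0]
    calc (inner ℝ (T z) z : ℝ) ≤ ‖T z‖ * ‖z‖ := real_inner_le_norm _ _
      _ ≤ ‖T'‖ * ‖z‖ * ‖z‖ := by
          have : ‖T z‖ ≤ ‖T'‖ * ‖z‖ := T'.le_opNorm z
          exact mul_le_mul_of_nonneg_right this (norm_nonneg _)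
      _ = ‖T'‖ * ‖z‖ ^ 2 := by ring
  set μ : ℝ := ⨆ z : { z : EuclideanSpace ℝ V // z ≠ 0 },
      RCLike.re (inner ℝ (T z) (z : EuclideanSpace ℝ V) : ℝ) / ‖(z : EuclideanSpace ℝ V)‖ ^ 2 with hμdef
  have hcμ : c ≤ μ := le_trans hray (le_ciSup hbdd ⟨y, hy0⟩)
  have heig : Module.End.HasEigenvalue T μ := by
    have := hT.hasEigenvalue_iSup_of_finiteDimensional
    exact this
  have hmem : μ ∈ spectrum ℝ A := by
    rw [← Matrix.spectrum_toEuclideanLin (A := A) (𝕜 := ℝ)]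
    exact heig.mem_spectrum
  have : μ ≤ sSup (spectrum ℝ A) :=
    le_csSup (Matrix.finite_spectrum A).bddAbove hmem
  calc sInf S = c := rfl
    _ ≤ μ := hcμ
    _ ≤ sSup (spectrum ℝ A) := this
end

section
/- If G is a connected graph with non-empty edge set and μ(G) = min{√(d(u)·d(v)) : uv ∈ E(G)}, then G is regular or semi-regular bipartite. -/
open Finset

open Matrix in
private lemma quad_le_aux {n : Type*} [Fintype n] [DecidableEq n] {A : Matrix n n ℝ}
    (hA : A.IsHermitian) (M : ℝ) (hM : ∀ i, hA.eigenvalues i ≤ M) (x : n → ℝ) :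
    x ⬝ᵥ (A *ᵥ x) ≤ M * (x ⬝ᵥ x) := by
  classical
  set e := hA.eigenvectorBasis with he
  set L : EuclideanSpace ℝ n ≃ₗ[ℝ] (n → ℝ) := WithLp.linearEquiv 2 ℝ (n → ℝ) with hL
  set c : n → ℝ := fun i => e.repr (L.symm x) i with hc
  set f : n → (n → ℝ) := fun i => L (e i) with hf
  have hx : x = ∑ i, c i • f i := by
    have h0 := congrArg L (e.sum_repr (L.symm x))
    rw [map_sum, L.apply_symm_apply] at h0
    simp only [_root_.map_smul] at h0
    exact h0.symm
  have hfe : ∀ j, A *ᵥ f j = hA.eigenvalues j • f j := fun j => hA.mulVec_eigenvectorBasis j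
  have horth : ∀ i j, (f i ⬝ᵥ f j : ℝ) = if i = j then 1 else 0 := by
    intro i j
    have := orthonormal_iff_ite.mp e.orthonormal i j
    simpa [PiLp.inner_apply, dotProduct, RCLike.inner_apply, conj_trivial, hf, hL,
      mul_comm] using this
  have dsum : ∀ (g : n → n → ℝ) (u : n → ℝ),
      (∑ i, g i) ⬝ᵥ u = ∑ i, g i ⬝ᵥ u := by
    intro g u
    simp only [dotProduct, Finset.sum_apply, Finset.sum_mul]
    exact Finset.sum_comm
  have key : ∀ a b : n → ℝ, (∑ i, a i • f i) ⬝ᵥ (∑ j, b j • f j) = ∑ i, a i * b i := by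
    intro a b
    rw [dsum]
    refine Finset.sum_congr rfl fun i _ => ?_
    rw [smul_dotProduct]
    have : f i ⬝ᵥ (∑ j, b j • f j) = b i := by
      have hdc : ∀ (u : n → ℝ) (g : n → n → ℝ), u ⬝ᵥ (∑ j, g j) = ∑ j, u ⬝ᵥ g j := by
        intro u g
        simp only [dotProduct, Finset.sum_apply, Finset.mul_sum]
        exact Finset.sum_comm
      rw [hdc]
      simp only [dotProduct_smul, horth, smul_eq_mul, mul_ite, mul_one, mul_zero,
        Finset.sum_ite_eq, Finset.mem_univ, if_true]
    rw [this, smul_eq_mul]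
  have hmul : A *ᵥ x = ∑ i, (hA.eigenvalues i * c i) • f i := by
    rw [hx]
    have : A *ᵥ (∑ i, c i • f i) = A.mulVecLin (∑ i, c i • f i) := rfl
    rw [this, map_sum]
    refine Finset.sum_congr rfl fun i _ => ?_
    rw [_root_.map_smul, mulVecLin_apply, hfe i, smul_smul, mul_comm]
  have h1 : x ⬝ᵥ (A *ᵥ x) = ∑ j, c j * (hA.eigenvalues j * c j) := by
    rw [hmul]
    conv_lhs => rw [hx]
    exact key _ _
  have h2 : x ⬝ᵥ x = ∑ j, c j * c j := by
    conv_lhs => rw [hx]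
    exact key _ _
  rw [h1, h2, Finset.mul_sum]
  refine Finset.sum_le_sum fun j _ => ?_
  have : c j * (hA.eigenvalues j * c j) = hA.eigenvalues j * (c j * c j) := by ring
  rw [this]
  exact mul_le_mul_of_nonneg_right (hM j) (mul_self_nonneg _)

private lemma deg_eq_degree {V : Type*} [Fintype V] (G : SimpleGraph V) [DecidableRel G.Adj]
    (v : V) : deg G v = G.degree v := by
  rw [deg, ← SimpleGraph.card_neighborSet_eq_degree, Set.ncard_eq_toFinset_card',
    Set.toFinset_card]

private lemma combi {V : Type*} [Fintype V] (G : SimpleGraph V) (hconn : G.Connected)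
    (a b : V) (hab : G.Adj a b) (hpos : ∀ v, 0 < deg G v)
    (hc : ∀ u v, G.Adj u v → deg G u * deg G v = deg G a * deg G b) :
    (∃ r : ℕ, ∀ v : V, deg G v = r) ∨ IsSemiregularBipartite G := by
  set da := deg G a with hda
  set db := deg G b with hdb
  have step1 : ∀ u v, G.Adj u v → deg G u = da → deg G v = db := by
    intro u v huv hu
    have h := hc u v huv
    rw [hu] at h
    exact Nat.eq_of_mul_eq_mul_left (hpos a) h
  have step2 : ∀ u v, G.Adj u v → deg G u = db → deg G v = da := by
    intro u v huv hu
    have h := hc u v huv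
    rw [hu] at h
    have h2 : db * deg G v = db * da := by rw [h]; ring
    exact Nat.eq_of_mul_eq_mul_left (hpos b) h2
  have claim : ∀ v, deg G v = da ∨ deg G v = db := by
    have aux : ∀ (u v : V) (_ : G.Walk u v),
        deg G u = da ∨ deg G u = db → deg G v = da ∨ deg G v = db := by
      intro u v w
      induction w with
      | nil => exact id
      | cons h p ih =>
        intro hu
        apply ih
        rcases hu with h1 | h1
        · exact Or.inr (step1 _ _ h h1)
        · exact Or.inl (step2 _ _ h h1)
    intro v
    obtain ⟨w⟩ := hconn.preconnected a v
    exact aux a v w (Or.inl rfl)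
  by_cases hreg : da = db
  · left
    refine ⟨da, fun v => ?_⟩
    rcases claim v with h | h
    · exact h
    · rw [h, ← hreg]
  · right
    refine ⟨{v | deg G v = da}, da, db, ?_, fun u hu => hu, fun u hu => ?_⟩
    · intro u v huv
      constructor
      · intro hu
        have hv : deg G v = db := step1 _ _ huv hu
        simp only [Set.mem_setOf_eq, hv]
        exact fun h => hreg h.symm
      · intro hv
        rcases claim u with h | h
        · exact h
        · exact absurd (step2 _ _ huv h) hv
    · rcases claim u with h | h
      · exact absurd h hu
      · exact h

open Matrix in
/-- If `G` is connected with non-empty edge set and the spectral radius equals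
`min{√(d(u)·d(v)) : uv ∈ E(G)}`, then `G` is regular or semi-regular bipartite. -/
theorem stmt_1 {V : Type*} [Fintype V] [DecidableEq V] (G : SimpleGraph V)
    (hconn : G.Connected) (h : G.edgeSet.Nonempty)
    (heq : specRad G =
      sInf {x : ℝ | ∃ u v : V, G.Adj u v ∧ x = Real.sqrt ((deg G u : ℝ) * deg G v)}) :
    (∃ r : ℕ, ∀ v : V, deg G v = r) ∨ IsSemiregularBipartite G := by
  classical
  letI : DecidableRel G.Adj := Classical.decRel _
  -- basic setup
  obtain ⟨e0, he0⟩ := h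
  induction e0 using Sym2.ind with
  | _ a b =>
  rw [SimpleGraph.mem_edgeSet] at he0
  have hne : Nonempty V := ⟨a⟩
  set A : Matrix V V ℝ := G.adjMatrix ℝ with hA_def
  have hA : A.IsHermitian := by
    ext u v
    simp only [hA_def, Matrix.conjTranspose_apply, SimpleGraph.adjMatrix_apply, star_trivial]
    simp [SimpleGraph.adj_comm]
  have hdegpos : ∀ v, 0 < deg G v := by
    intro v
    rw [deg_eq_degree]
    rw [SimpleGraph.degree_pos_iff_exists_adj]
    obtain ⟨w⟩ := hconn.preconnected v a
    cases w with
    | nil => exact ⟨b, he0⟩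
    | cons h p => exact ⟨_, h⟩
  -- the test vector
  set xv : V → ℝ := fun v => Real.sqrt (deg G v) with hx_def
  set S : Set ℝ :=
    {x : ℝ | ∃ u v : V, G.Adj u v ∧ x = Real.sqrt ((deg G u : ℝ) * deg G v)} with hS_def
  set m : ℝ := sInf S with hm_def
  have hSne : S.Nonempty := ⟨_, a, b, he0, rfl⟩
  have hSbdd : BddBelow S := by
    refine ⟨0, fun y hy => ?_⟩
    obtain ⟨u, v, _, rfl⟩ := hy
    exact Real.sqrt_nonneg _
  have hm_le : ∀ u v : V, G.Adj u v → m ≤ Real.sqrt ((deg G u : ℝ) * deg G v) :=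
    fun u v huv => csInf_le hSbdd ⟨u, v, huv, rfl⟩
  -- the largest eigenvalue
  obtain ⟨i0, -, hi0⟩ := Finset.exists_max_image (Finset.univ : Finset V) hA.eigenvalues
    ⟨a, Finset.mem_univ a⟩
  set M : ℝ := hA.eigenvalues i0 with hM_def
  have hMm : M ≤ m := by
    have h1 : M ≤ specRad G := by
      rw [show specRad G = sSup (spectrum ℝ A) from rfl]
      exact le_csSup (Matrix.finite_spectrum A).bddAbove
        (hA.eigenvalues_mem_spectrum_real i0)
    exact le_of_le_of_eq h1 heq
  have hquad : xv ⬝ᵥ (A *ᵥ xv) ≤ M * (xv ⬝ᵥ xv) :=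
    quad_le_aux hA M (fun i => hi0 i (Finset.mem_univ i)) xv
  -- the set of ordered adjacent pairs
  set T : Finset (V × V) := Finset.univ.filter (fun p : V × V => G.Adj p.1 p.2) with hT_def
  have hTne : T.Nonempty := ⟨(a, b), by simp [hT_def, he0]⟩
  have hsum1 : xv ⬝ᵥ (A *ᵥ xv) = ∑ p ∈ T, Real.sqrt ((deg G p.1 : ℝ) * deg G p.2) := by
    rw [dotProduct]
    simp only [hA_def, SimpleGraph.adjMatrix_mulVec_apply]
    rw [hT_def, Finset.sum_filter, ← Finset.univ_product_univ, Finset.sum_product]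
    refine Finset.sum_congr rfl fun v _ => ?_
    rw [Finset.mul_sum, SimpleGraph.neighborFinset_eq_filter, Finset.sum_filter]
    refine Finset.sum_congr rfl fun u _ => ?_
    by_cases hvu : G.Adj v u
    · simp only [hvu, if_true, hx_def]
      rw [← Real.sqrt_mul (Nat.cast_nonneg _)]
    · simp [hvu]
  have hsum2 : xv ⬝ᵥ xv = (T.card : ℝ) := by
    rw [dotProduct]
    have hxx : ∀ v, xv v * xv v = (deg G v : ℝ) := fun v =>
      Real.mul_self_sqrt (Nat.cast_nonneg _)
    simp only [hxx]
    rw [hT_def, Finset.card_filter, ← Finset.univ_product_univ, Finset.sum_product]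
    push_cast
    refine Finset.sum_congr rfl fun v _ => ?_
    rw [deg_eq_degree, ← SimpleGraph.card_neighborFinset_eq_degree,
      SimpleGraph.neighborFinset_eq_filter, Finset.card_filter]
    push_cast
    rfl
  -- every edge attains the minimum
  have hedge : ∀ u v : V, G.Adj u v → Real.sqrt ((deg G u : ℝ) * deg G v) = m := by
    intro u v huv
    by_contra hne'
    have hlt : m < Real.sqrt ((deg G u : ℝ) * deg G v) :=
      lt_of_le_of_ne (hm_le u v huv) (Ne.symm hne')
    have hstrict : (∑ _p ∈ T, m) < ∑ p ∈ T, Real.sqrt ((deg G p.1 : ℝ) * deg G p.2) := by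
      refine Finset.sum_lt_sum (fun p hp => ?_) ⟨(u, v), ?_, hlt⟩
      · rw [hT_def, Finset.mem_filter] at hp
        exact hm_le p.1 p.2 hp.2
      · simp [hT_def, huv]
    rw [Finset.sum_const, nsmul_eq_mul] at hstrict
    have hub : (∑ p ∈ T, Real.sqrt ((deg G p.1 : ℝ) * deg G p.2)) ≤ m * T.card := by
      calc (∑ p ∈ T, Real.sqrt ((deg G p.1 : ℝ) * deg G p.2))
          = xv ⬝ᵥ (A *ᵥ xv) := hsum1.symm
        _ ≤ M * (xv ⬝ᵥ xv) := hquad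
        _ = M * T.card := by rw [hsum2]
        _ ≤ m * T.card := by
            apply mul_le_mul_of_nonneg_right hMm (Nat.cast_nonneg _)
    rw [mul_comm] at hub
    exact absurd (lt_of_lt_of_le hstrict hub) (lt_irrefl _)
  -- degrees products are constant on edges
  have hc : ∀ u v : V, G.Adj u v → deg G u * deg G v = deg G a * deg G b := by
    intro u v huv
    have h1 := hedge u v huv
    have h2 := hedge a b he0
    have e1 : ((deg G u : ℝ) * deg G v) = m * m := by
      rw [← h1, Real.mul_self_sqrt (mul_nonneg (Nat.cast_nonneg _) (Nat.cast_nonneg _))]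
    have e2 : ((deg G a : ℝ) * deg G b) = m * m := by
      rw [← h2, Real.mul_self_sqrt (mul_nonneg (Nat.cast_nonneg _) (Nat.cast_nonneg _))]
    have h3 : ((deg G u * deg G v : ℕ) : ℝ) = ((deg G a * deg G b : ℕ) : ℝ) := by
      push_cast
      rw [e1, e2]
    exact_mod_cast h3
  exact combi G hconn a b he0 hdegpos hc
end

section
/- The k-closure of a graph G is unique: any two graphs obtained from G by repeatedly joining nonadjacent vertex pairs with degree sum at least k, until no such pair remains, are equal. -/
open Finset

lemma deg_mono {V : Type*} [Fintype V] {G H : SimpleGraph V} (h : G ≤ H) (v : V) :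
    deg G v ≤ deg H v := by
  apply Set.ncard_le_ncard (fun u hu => h hu) (Set.toFinite _)

lemma step_le {V : Type*} {k : ℕ} {G H : SimpleGraph V} (h : ClosureStep k G H) : G ≤ H := by
  obtain ⟨u, v, -, -, -, rfl⟩ := h; exact le_sup_left

lemma closure_le {V : Type*} [Fintype V] {k : ℕ} {G H : SimpleGraph V}
    (h : Relation.ReflTransGen (ClosureStep k) G H)
    (H' : SimpleGraph V) (hc : IsKClosed k H') (hle : G ≤ H') : H ≤ H' := by
  induction h with
  | refl => exact hle
  | tail _ hstep ih =>
    obtain ⟨u, v, huv, _, hdeg, rfl⟩ := hstep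
    have hadj : H'.Adj u v := by
      by_contra hna
      have := hc u v huv hna
      have h1 := deg_mono ih u
      have h2 := deg_mono ih v
      omega
    refine sup_le ih ?_
    intro a b hab
    simp only [SimpleGraph.fromEdgeSet_adj, Set.mem_singleton_iff, Sym2.eq, Sym2.rel_iff',
      Prod.mk.injEq, Prod.swap_prod_mk] at hab
    rcases hab.1 with ⟨rfl, rfl⟩ | ⟨rfl, rfl⟩
    · exact hadj
    · exact hadj.symm

/-- The `k`-closure of a graph is unique. -/
theorem stmt_3 {V : Type*} [Fintype V] (k : ℕ) (G H₁ H₂ : SimpleGraph V)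
    (h₁ : IsKClosure k G H₁) (h₂ : IsKClosure k G H₂) : H₁ = H₂ := by
  have hle : ∀ {H : SimpleGraph V}, Relation.ReflTransGen (ClosureStep k) G H → G ≤ H := by
    intro H h
    induction h with
    | refl => exact le_refl G
    | tail _ hstep ih => exact le_trans ih (step_le hstep)
  exact le_antisymm (closure_le h₁.1 H₂ h₂.2 (hle h₂.1))
    (closure_le h₂.1 H₁ h₁.2 (hle h₁.1))
end

section
/- Let G be a graph of order n and H a graph obtained from G by adding an edge uv where u, v are nonadjacent in G and d_G(u) + d_G(v) ≥ n + s − 2. Then G is s-connected if and only if H is s-connected. -/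
open Finset

open SimpleGraph
lemma reach_aux {W : Type*} (K : SimpleGraph W) (u v a b : W)
    (h : (K ⊔ SimpleGraph.fromEdgeSet {s(u, v)}).Reachable a b) :
    K.Reachable a b ∨ (K.Reachable a u ∧ K.Reachable v b) ∨
      (K.Reachable a v ∧ K.Reachable u b) := by
  obtain ⟨p⟩ := h
  induction p with
  | nil => exact Or.inl (Reachable.refl _)
  | @cons x y z h' p ih =>
    have h'' : K.Adj x y ∨ (x = u ∧ y = v) ∨ (x = v ∧ y = u) := by
      rcases h' with h' | h'
      · exact Or.inl h'
      · rw [fromEdgeSet_adj] at h'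
        simp only [Set.mem_singleton_iff, Sym2.eq, Sym2.rel_iff', Prod.mk.injEq,
          Prod.swap_prod_mk] at h'
        tauto
    rcases h'' with h'' | ⟨rfl, rfl⟩ | ⟨rfl, rfl⟩
    · rcases ih with h1 | ⟨h1, h2⟩ | ⟨h1, h2⟩
      · exact Or.inl (h''.reachable.trans h1)
      · exact Or.inr (Or.inl ⟨h''.reachable.trans h1, h2⟩)
      · exact Or.inr (Or.inr ⟨h''.reachable.trans h1, h2⟩)
    · rcases ih with h1 | ⟨h1, h2⟩ | ⟨h1, h2⟩
      · exact Or.inr (Or.inl ⟨Reachable.refl _, h1⟩)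
      · exact Or.inl (h1.symm.trans h2)
      · exact Or.inl h2
    · rcases ih with h1 | ⟨h1, h2⟩ | ⟨h1, h2⟩
      · exact Or.inr (Or.inr ⟨Reachable.refl _, h1⟩)
      · exact Or.inl h2
      · exact Or.inl (h1.symm.trans h2)

/-- Adding an edge between nonadjacent vertices with degree sum at least
`n + s - 2` preserves `s`-connectivity in both directions. -/
theorem stmt_4 {V : Type*} [Fintype V] (n s : ℕ) (G : SimpleGraph V)
    (hcard : Fintype.card V = n) (u v : V) (huv : u ≠ v) (hadj : ¬ G.Adj u v)
    (hdeg : (n : ℤ) + s - 2 ≤ (deg G u : ℤ) + deg G v) :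
    SConnected s G ↔ SConnected s (G ⊔ SimpleGraph.fromEdgeSet {s(u, v)}) := by
  set H := G ⊔ SimpleGraph.fromEdgeSet {s(u, v)} with hH
  constructor
  · rintro ⟨h1, h2⟩
    refine ⟨h1, fun S hS => (h2 S hS).mono ?_⟩
    intro a b hab
    exact Or.inl hab
  · rintro ⟨h1, h2⟩
    refine ⟨h1, fun S hS => ?_⟩
    have hHc := h2 S hS
    set T : Set V := (↑S : Set V)ᶜ with hT
    by_cases huvT : u ∈ T ∧ v ∈ T
    · obtain ⟨hu, hv⟩ := huvT
      set u' : T := ⟨u, hu⟩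
      set v' : T := ⟨v, hv⟩
      have hind : H.induce T = (G.induce T) ⊔ SimpleGraph.fromEdgeSet {s(u', v')} := by
        ext a b
        constructor
        · rintro (h | h)
          · exact Or.inl h
          · rw [fromEdgeSet_adj] at h
            refine Or.inr ⟨?_, fun hab => h.2 (congrArg Subtype.val hab)⟩
            have h1 := h.1
            rw [Set.mem_singleton_iff, Sym2.eq_iff] at h1
            rw [Sym2.toRel_prop, Set.mem_singleton_iff, Sym2.eq_iff]
            rcases h1 with ⟨ha, hb⟩ | ⟨ha, hb⟩
            · exact Or.inl ⟨Subtype.ext ha, Subtype.ext hb⟩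
            · exact Or.inr ⟨Subtype.ext ha, Subtype.ext hb⟩
        · rintro (h | h)
          · exact Or.inl h
          · rw [fromEdgeSet_adj] at h
            refine Or.inr ⟨?_, fun hab => h.2 (Subtype.ext hab)⟩
            have h1 := h.1
            rw [Set.mem_singleton_iff, Sym2.eq_iff] at h1
            rw [Sym2.toRel_prop, Set.mem_singleton_iff, Sym2.eq_iff]
            rcases h1 with ⟨ha, hb⟩ | ⟨ha, hb⟩
            · exact Or.inl ⟨congrArg Subtype.val ha, congrArg Subtype.val hb⟩
            · exact Or.inr ⟨congrArg Subtype.val ha, congrArg Subtype.val hb⟩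
      by_contra hGc
      haveI : Nonempty T := ⟨u'⟩
      have hnp : ¬ (G.induce T).Preconnected := fun hp => hGc (SimpleGraph.Connected.mk hp)
      have hnr : ¬ (G.induce T).Reachable u' v' := by
        intro hr
        refine hnp fun a b => ?_
        have := reach_aux _ u' v' a b (by rw [← hind]; exact hHc.preconnected a b)
        rcases this with h | ⟨h1', h2'⟩ | ⟨h1', h2'⟩
        · exact h
        · exact h1'.trans (hr.trans h2')
        · exact h1'.trans (hr.symm.trans h2')
      set A : Set V := {x | ∃ hx : x ∈ T, (G.induce T).Reachable u' ⟨x, hx⟩} with hA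
      set B : Set V := {x | ∃ hx : x ∈ T, (G.induce T).Reachable v' ⟨x, hx⟩} with hB
      have hmemA : ∀ x, x ∈ A ↔ ∃ hx : x ∈ T, (G.induce T).Reachable u' ⟨x, hx⟩ :=
        fun x => Iff.rfl
      have hmemB : ∀ x, x ∈ B ↔ ∃ hx : x ∈ T, (G.induce T).Reachable v' ⟨x, hx⟩ :=
        fun x => Iff.rfl
      have hAB : ∀ x (hx : x ∈ T), x ∈ A ∨ x ∈ B := by
        intro x hx
        have := reach_aux _ u' v' u' ⟨x, hx⟩ (by rw [← hind]; exact hHc.preconnected _ _)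
        rcases this with h | ⟨h1', h2'⟩ | ⟨h1', h2'⟩
        · exact Or.inl ((hmemA x).mpr ⟨hx, h⟩)
        · exact Or.inr ((hmemB x).mpr ⟨hx, h2'⟩)
        · exact absurd h1' hnr
      have hdisj : Disjoint A B := by
        rw [Set.disjoint_left]
        intro x hxA hxB
        obtain ⟨hx, hxu⟩ := (hmemA x).mp hxA
        obtain ⟨hx2, hxv⟩ := (hmemB x).mp hxB
        exact hnr (hxu.trans hxv.symm)
      have huA : u ∈ A := (hmemA u).mpr ⟨hu, Reachable.refl _⟩
      have hvB : v ∈ B := (hmemB v).mpr ⟨hv, Reachable.refl _⟩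
      have hNu : G.neighborSet u ⊆ (A \ {u}) ∪ ↑S := by
        intro w hw
        by_cases hwS : w ∈ S
        · exact Or.inr hwS
        · have hwT : w ∈ T := hwS
          have : (G.induce T).Adj u' ⟨w, hwT⟩ := hw
          exact Or.inl ⟨(hmemA w).mpr ⟨hwT, this.reachable⟩, fun h => G.irrefl (h ▸ hw)⟩
      have hNv : G.neighborSet v ⊆ (B \ {v}) ∪ ↑S := by
        intro w hw
        by_cases hwS : w ∈ S
        · exact Or.inr hwS
        · have hwT : w ∈ T := hwS
          have : (G.induce T).Adj v' ⟨w, hwT⟩ := hw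
          exact Or.inl ⟨(hmemB w).mpr ⟨hwT, this.reachable⟩, fun h => G.irrefl (h ▸ hw)⟩
      have hdu : deg G u ≤ (A \ {u}).ncard + S.card := by
        calc deg G u ≤ ((A \ {u}) ∪ ↑S).ncard := Set.ncard_le_ncard hNu (Set.toFinite _)
        _ ≤ (A \ {u}).ncard + (↑S : Set V).ncard := Set.ncard_union_le _ _
        _ = (A \ {u}).ncard + S.card := by rw [Set.ncard_coe_finset]
      have hdv : deg G v ≤ (B \ {v}).ncard + S.card := by
        calc deg G v ≤ ((B \ {v}) ∪ ↑S).ncard := Set.ncard_le_ncard hNv (Set.toFinite _)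
        _ ≤ (B \ {v}).ncard + (↑S : Set V).ncard := Set.ncard_union_le _ _
        _ = (B \ {v}).ncard + S.card := by rw [Set.ncard_coe_finset]
      have hAu : (A \ {u}).ncard + 1 = A.ncard :=
        Set.ncard_diff_singleton_add_one huA (Set.toFinite _)
      have hBv : (B \ {v}).ncard + 1 = B.ncard :=
        Set.ncard_diff_singleton_add_one hvB (Set.toFinite _)
      have hsub : A ∪ B ⊆ T := by
        rintro x (⟨hx, _⟩ | ⟨hx, _⟩) <;> exact hx
      have hcount : A.ncard + B.ncard + S.card ≤ n := by
        have h1' : A.ncard + B.ncard = (A ∪ B).ncard :=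
          (Set.ncard_union_eq hdisj (Set.toFinite _) (Set.toFinite _)).symm
        have h2' : (A ∪ B).ncard ≤ T.ncard := Set.ncard_le_ncard hsub (Set.toFinite _)
        have h3' := Set.ncard_add_ncard_compl (↑S : Set V)
        rw [Nat.card_eq_fintype_card, hcard, Set.ncard_coe_finset] at h3'
        have h4' : T.ncard = (↑S : Set V)ᶜ.ncard := by rw [hT]
        omega
      have : (deg G u : ℤ) + deg G v + 2 ≤ n + S.card := by
        push_cast
        omega
      have hS' : (S.card : ℤ) < s := by exact_mod_cast hS
      omega
    · have heq : G.induce T = H.induce T := by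
        ext a b
        constructor
        · exact fun h => Or.inl h
        · rintro (h | h)
          · exact h
          · exfalso
            rw [fromEdgeSet_adj] at h
            simp only [Set.mem_singleton_iff, Sym2.eq, Sym2.rel_iff', Prod.mk.injEq,
              Prod.swap_prod_mk] at h
            rcases h.1 with ⟨ha, hb⟩ | ⟨ha, hb⟩
            · exact huvT ⟨by rw [← ha]; exact a.2, by rw [← hb]; exact b.2⟩
            · exact huvT ⟨by rw [← hb]; exact b.2, by rw [← ha]; exact a.2⟩
      rw [heq]
      exact hHc
end

section
/- Let G be a graph of order n. Then G is s-Hamiltonian if and only if its (n+s)-closure C_{n+s}(G) is s-Hamiltonian. -/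
open Finset

namespace BC
open SimpleGraph Walk

variable {V : Type*} {G : SimpleGraph V}

def mkWalk (G : SimpleGraph V) : (a : V) → (l : List V) → List.Chain G.Adj a l →
    G.Walk a ((a :: l).getLast (List.cons_ne_nil a l))
  | _, [], _ => Walk.nil
  | a, c :: l, h =>
    (Walk.cons (List.chain_cons.mp h).1 (mkWalk G c l (List.chain_cons.mp h).2)).copy rfl
      (List.getLast_cons (List.cons_ne_nil c l)).symm

lemma support_mkWalk (G : SimpleGraph V) : ∀ (a : V) (l : List V) (h : List.Chain G.Adj a l),
    (mkWalk G a l h).support = a :: l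
  | _, [], _ => rfl
  | a, c :: l, h => by
    rw [mkWalk, Walk.support_copy, Walk.support_cons]
    exact congrArg (a :: ·) (support_mkWalk G c l _)

lemma start_unique {a c b x : V} {h : G.Adj a c} {r : G.Walk c b}
    (hp : (Walk.cons h r).IsPath) (hx : s(a, x) ∈ (Walk.cons h r).edges) : x = c := by
  rw [Walk.edges_cons, List.mem_cons] at hx
  rcases hx with hx | hx
  · exact Sym2.congr_right.mp hx
  · exact absurd (Walk.fst_mem_support_of_mem_edges r hx) ((Walk.cons_isPath_iff h r).mp hp).2

/-- From a Hamiltonian cycle through the edge `uv`, extract a Hamiltonian path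
from `u` to `v` avoiding the edge `uv`. -/
lemma exists_ham_path {W : Type*} [DecidableEq W] {B : SimpleGraph W} {u v a : W}
    (c : B.Walk a a) (hc : c.IsHamiltonianCycle) (he : s(u, v) ∈ c.edges) :
    ∃ P : B.Walk u v, P.IsPath ∧ s(u, v) ∉ P.edges ∧ ∀ x, x ∈ P.support := by
  have hu : u ∈ c.support := hc.mem_support u
  set c₁ := c.rotate u hu with hc₁def
  have hc₁ : c₁.IsHamiltonianCycle := by
    rw [Walk.isHamiltonianCycle_iff_isCycle_and_support_count_tail_eq_one] at hc ⊢
    exact ⟨hc.1.rotate hu, fun x => by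
      rw [(Walk.support_rotate c u hu).perm.count_eq]; exact hc.2 x⟩
  have he₁ : s(u, v) ∈ c₁.edges := (Walk.rotate_edges c u hu).perm.mem_iff.mpr he
  have hnn : ¬ c₁.Nil := hc₁.isCycle.not_nil
  obtain ⟨w, h, q, hq⟩ := Walk.not_nil_iff.mp hnn
  have hcyc : (Walk.cons h q).IsCycle := hq ▸ hc₁.isCycle
  obtain ⟨hqpath, hfe⟩ := (Walk.cons_isCycle_iff q h).mp hcyc
  have hcount : ∀ x, q.support.count x = 1 := by
    intro x
    have := (Walk.isHamiltonianCycle_iff_isCycle_and_support_count_tail_eq_one.mp hc₁).2 x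
    rwa [hq, Walk.support_cons, List.tail_cons] at this
  have hqmem : ∀ x, x ∈ q.support := fun x =>
    List.count_pos_iff.mp (by rw [hcount x]; norm_num)
  have he₂ : s(u, v) ∈ s(u, w) :: q.edges := by
    rw [← Walk.edges_cons h q, ← hq]; exact he₁
  rcases List.mem_cons.mp he₂ with he₂ | he₂
  · -- first edge is uv, so w = v
    have hwv : w = v := (Sym2.congr_right.mp he₂).symm
    subst hwv
    refine ⟨q.reverse, hqpath.reverse, ?_, ?_⟩
    · rw [Walk.edges_reverse, List.mem_reverse]; exact fun hx => hfe hx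
    · intro x; rw [Walk.support_reverse, List.mem_reverse]; exact hqmem x
  · -- uv is in q; reverse q and look at its first edge
    have hwv : w ≠ v := by
      rintro rfl; exact hfe he₂
    have hp : q.reverse.IsPath := hqpath.reverse
    have hpe : s(u, v) ∈ q.reverse.edges := by
      rw [Walk.edges_reverse, List.mem_reverse]; exact he₂
    have hnn2 : ¬ q.reverse.Nil := Walk.not_nil_of_ne h.ne
    obtain ⟨x, h', r, hq2⟩ := Walk.not_nil_iff.mp hnn2
    have hvx : v = x := start_unique (hq2 ▸ hp) (hq2 ▸ hpe)
    subst hvx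
    have hrp : r.IsPath ∧ u ∉ r.support := (Walk.cons_isPath_iff h' r).mp (hq2 ▸ hp)
    refine ⟨Walk.cons h r.reverse, ?_, ?_, ?_⟩
    · rw [Walk.cons_isPath_iff]
      exact ⟨hrp.1.reverse, by rw [Walk.support_reverse, List.mem_reverse]; exact hrp.2⟩
    · rw [Walk.edges_cons, List.mem_cons]
      rintro (hx | hx)
      · exact hwv (Sym2.congr_right.mp hx).symm
      · rw [Walk.edges_reverse, List.mem_reverse] at hx
        exact hrp.2 (Walk.fst_mem_support_of_mem_edges r hx)
    · intro y
      have hy := hqmem y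
      have heq := congrArg Walk.support hq2
      rw [Walk.support_reverse, Walk.support_cons] at heq
      have h2 := congrArg List.reverse heq
      rw [List.reverse_reverse] at h2
      rw [h2] at hy
      rw [Walk.support_cons, Walk.support_reverse]
      simp only [List.reverse_cons, List.mem_append, List.mem_reverse, List.mem_cons,
        List.mem_singleton] at hy ⊢
      tauto


lemma build {W : Type*} [Fintype W] [DecidableEq W] {A : SimpleGraph W} {u v : W}
    (hna : ¬ A.Adj u v) (hdeg : Fintype.card W ≤ deg A u + deg A v)
    (P : A.Walk u v) (hP : P.IsPath) (hcov : ∀ x, x ∈ P.support) :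
    ∃ a, ∃ c : A.Walk a a, c.IsHamiltonianCycle := by
  classical
  set L := P.support with hLdef
  have hnd : L.Nodup := hP.support_nodup
  set m := L.length with hmdef
  have hlen : Fintype.card W = m := by
    have ht : L.toFinset = Finset.univ := by
      ext x; simp only [List.mem_toFinset, Finset.mem_univ, iff_true]; exact hcov x
    rw [hmdef, ← List.toFinset_card_of_nodup hnd, ht, Finset.card_univ]
  set f : ℕ → W := fun i => L.getD i u with hfdef
  have hfget : ∀ {i : ℕ} (h : i < m), f i = L[i] := fun h => List.getD_eq_getElem L u h
  have hfsome : ∀ {i : ℕ}, i < m → L[i]? = some (f i) := by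
    intro i h; rw [List.getElem?_eq_getElem h, hfget h]
  have hm0 : 0 < m := List.length_pos_of_mem (hcov u)
  have h0 : L[0]? = some u := by
    rw [hLdef, P.support_eq_cons]; simp
  have hf0 : f 0 = u := by
    have := hfsome hm0; rw [h0] at this; exact (Option.some_inj.mp this).symm
  have hlastv : L[m - 1]? = some v := by
    have h1 : L.getLast? = some v := by
      rw [List.getLast?_eq_getLast (by rw [hLdef]; exact P.support_ne_nil), P.getLast_support]
    rwa [List.getLast?_eq_getElem?] at h1
  have hfv : f (m - 1) = v := by
    have := hfsome (i := m - 1) (by omega); rw [hlastv] at this; exact (Option.some_inj.mp this).symm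
  have finj : ∀ {i j : ℕ}, i < m → j < m → f i = f j → i = j := by
    intro i j hi hj e
    rw [hfget hi, hfget hj] at e
    exact (hnd.getElem_inj_iff).mp e
  have fmem : ∀ x, ∃ i, i < m ∧ f i = x := by
    intro x
    obtain ⟨i, h, e⟩ := List.mem_iff_getElem.mp (hcov x)
    exact ⟨i, h, by rw [hfget h]; exact e⟩
  have hchainL : List.IsChain A.Adj L := P.isChain_adj_support
  have fchain : ∀ i, i + 1 < m → A.Adj (f i) (f (i + 1)) := by
    intro i h
    rw [hfget (by omega), hfget h]
    have := List.isChain_iff_getElem.mp hchainL i (by omega)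
    simpa using this
  -- pigeonhole
  set I : Finset ℕ := Finset.filter (fun i => A.Adj u (f i)) (Finset.range m) with hI
  set J : Finset ℕ := Finset.filter (fun i => A.Adj v (f i)) (Finset.range m) with hJ
  have hcardI : I.card = deg A u := by
    have himg : (A.neighborSet u) = ↑(I.image f) := by
      ext y
      simp only [Finset.coe_image, Set.mem_image, Finset.mem_coe, hI, Finset.mem_filter,
        Finset.mem_range, SimpleGraph.mem_neighborSet]
      constructor
      · intro hy
        obtain ⟨i, hi, rfl⟩ := fmem y
        exact ⟨i, ⟨hi, hy⟩, rfl⟩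
      · rintro ⟨i, ⟨hi, hadj⟩, rfl⟩
        exact hadj
    rw [deg, himg, Set.ncard_coe_finset]
    exact (Finset.card_image_of_injOn (fun i hi j hj e =>
      finj (Finset.mem_range.mp (Finset.mem_filter.mp hi).1)
        (Finset.mem_range.mp (Finset.mem_filter.mp hj).1) e)).symm
  have hcardJ : J.card = deg A v := by
    have himg : (A.neighborSet v) = ↑(J.image f) := by
      ext y
      simp only [Finset.coe_image, Set.mem_image, Finset.mem_coe, hJ, Finset.mem_filter,
        Finset.mem_range, SimpleGraph.mem_neighborSet]
      constructor
      · intro hy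
        obtain ⟨i, hi, rfl⟩ := fmem y
        exact ⟨i, ⟨hi, hy⟩, rfl⟩
      · rintro ⟨i, ⟨hi, hadj⟩, rfl⟩
        exact hadj
    rw [deg, himg, Set.ncard_coe_finset]
    exact (Finset.card_image_of_injOn (fun i hi j hj e =>
      finj (Finset.mem_range.mp (Finset.mem_filter.mp hi).1)
        (Finset.mem_range.mp (Finset.mem_filter.mp hj).1) e)).symm
  set J1 : Finset ℕ := J.image (· + 1) with hJ1
  have hsub : I ∪ J1 ⊆ Finset.Ico 1 m := by
    intro i hi
    rcases Finset.mem_union.mp hi with hi | hi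
    · rw [hI, Finset.mem_filter, Finset.mem_range] at hi
      rw [Finset.mem_Ico]
      refine ⟨?_, hi.1⟩
      rcases Nat.eq_zero_or_pos i with rfl | h
      · rw [hf0] at hi; exact absurd hi.2 (A.irrefl)
      · exact h
    · rw [hJ1, Finset.mem_image] at hi
      obtain ⟨j, hj, rfl⟩ := hi
      rw [hJ, Finset.mem_filter, Finset.mem_range] at hj
      rw [Finset.mem_Ico]
      have hjne : f j ≠ v := fun e => A.irrefl (e ▸ hj.2)
      have : j ≠ m - 1 := fun e => hjne (e ▸ hfv)
      omega
  have hinter : (I ∩ J1).Nonempty := by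
    by_contra hcon
    rw [Finset.not_nonempty_iff_eq_empty, ← Finset.disjoint_iff_inter_eq_empty] at hcon
    have h1 : (I ∪ J1).card = I.card + J1.card := Finset.card_union_of_disjoint hcon
    have h2 : (I ∪ J1).card ≤ m - 1 := by
      have := Finset.card_le_card hsub
      simpa [Nat.card_Ico] using this
    have h3 : J1.card = J.card := Finset.card_image_of_injective _ (add_left_injective 1)
    omega
  obtain ⟨i, hii⟩ := hinter
  rw [Finset.mem_inter] at hii
  obtain ⟨hiI, hiJ1⟩ := hii
  rw [hI, Finset.mem_filter, Finset.mem_range] at hiI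
  obtain ⟨him, hadju⟩ := hiI
  rw [hJ1, Finset.mem_image] at hiJ1
  obtain ⟨j, hjJ, hji⟩ := hiJ1
  rw [hJ, Finset.mem_filter, Finset.mem_range] at hjJ
  obtain ⟨hjm, hadjv⟩ := hjJ
  have h2i : 2 ≤ i := by
    rcases Nat.eq_zero_or_pos j with rfl | h
    · rw [hf0] at hadjv
      exact absurd hadjv.symm hna
    · omega
  have hadjv' : A.Adj v (f (i - 1)) := by
    have : i - 1 = j := by omega
    rw [this]; exact hadjv
  have hiv : f i ≠ v := fun e => hna (e ▸ hadju)
  have hi1m : i + 1 < m := by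
    have : i ≠ m - 1 := fun e => hiv (e ▸ hfv)
    omega
  -- build the cycle list
  set T := L.drop i with hT
  set K := (L.take i).reverse with hK
  set Lc := T ++ K with hLc
  have hperm : Lc.Perm L := by
    have h1 : Lc.Perm (T ++ L.take i) := List.Perm.append_left T (List.reverse_perm _)
    have h2 : (T ++ L.take i).Perm (L.take i ++ T) := List.perm_append_comm
    have h3 : L.take i ++ T = L := List.take_append_drop i L
    exact (h1.trans h2).trans (by rw [h3])
  have hndc : Lc.Nodup := (hperm.nodup_iff).mpr hnd
  have hmemc : ∀ x, x ∈ Lc := fun x => hperm.mem_iff.mpr (hcov x)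
  have hlenT : T.length = m - i := by simp [hT, hmdef]
  have hlenTake : (L.take i).length = i := by
    rw [List.length_take]; omega
  have hchainLc : List.IsChain A.Adj Lc := by
    rw [hLc, List.isChain_append]
    refine ⟨hchainL.suffix (List.drop_suffix i L), ?_, ?_⟩
    · rw [hK, List.isChain_reverse]
      exact (hchainL.prefix (List.take_prefix i L)).imp (fun a b hab => hab.symm)
    · intro x hx y hy
      have hxv : x = v := by
        rw [List.getLast?_eq_getElem?, hlenT, List.getElem?_drop] at hx
        have he : i + (m - i - 1) = m - 1 := by omega
        rw [he, hlastv] at hx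
        exact Option.some_inj.mp hx.symm
      have hyf : y = f (i - 1) := by
        rw [hK, List.head?_reverse, List.getLast?_eq_getElem?, hlenTake,
          List.getElem?_take] at hy
        have : i - 1 < i := by omega
        rw [if_pos this, hfsome (by omega)] at hy
        exact Option.some_inj.mp hy.symm
      rw [hxv, hyf]
      exact hadjv'
  have hTcons : T = f i :: L.drop (i + 1) := by
    rw [hT, List.drop_eq_getElem_cons him, hfget him]
  set M := L.drop (i + 1) ++ K with hM
  have hLcM : Lc = f i :: M := by
    rw [hLc, hTcons, hM, List.cons_append]
  have hchainM : List.Chain A.Adj (f i) M := by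
    have := hchainLc; rw [hLcM] at this; exact this
  have hKne : K ≠ [] := by
    rw [hK]
    simp only [ne_eq, List.reverse_eq_nil_iff]
    intro hcon
    have := congrArg List.length hcon
    rw [hlenTake] at this
    simp at this
    omega
  have hlast_u : (f i :: M).getLast (List.cons_ne_nil _ _) = u := by
    have h1 : (f i :: M).getLast? = some u := by
      rw [← hLcM, hLc, List.getLast?_append_of_ne_nil _ hKne, hK, List.getLast?_reverse,
        List.head?_eq_getElem?, List.getElem?_take, if_pos (by omega : 0 < i), h0]
    rw [List.getLast?_eq_getLast (List.cons_ne_nil _ _)] at h1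
    exact Option.some_inj.mp h1
  refine ⟨u, Walk.cons hadju ((mkWalk A (f i) M hchainM).copy rfl hlast_u), ?_⟩
  have hqsup : ((mkWalk A (f i) M hchainM).copy rfl hlast_u).support = Lc := by
    rw [Walk.support_copy, support_mkWalk, ← hLcM]
  have hqpath : ((mkWalk A (f i) M hchainM).copy rfl hlast_u).IsPath :=
    Walk.IsPath.mk' (by rw [hqsup]; exact hndc)
  set q := (mkWalk A (f i) M hchainM).copy rfl hlast_u with hq
  have hnotedge : s(u, f i) ∉ q.edges := by
    intro hmem
    have hp : q.reverse.IsPath := hqpath.reverse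
    have hpe : s(u, f i) ∈ q.reverse.edges := by
      rw [Walk.edges_reverse, List.mem_reverse]; exact hmem
    have hfiu : u ≠ f i := fun e => A.irrefl (e ▸ hadju)
    have hnn : ¬ q.reverse.Nil := Walk.not_nil_of_ne hfiu
    obtain ⟨x, h', r, hq2⟩ := Walk.not_nil_iff.mp hnn
    have hx : f i = x := start_unique (hq2 ▸ hp) (hq2 ▸ hpe)
    have hsup2 : Lc.reverse = u :: x :: r.support.tail := by
      have e1 := congrArg Walk.support hq2
      rw [Walk.support_reverse, hqsup, Walk.support_cons, r.support_eq_cons] at e1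
      exact e1
    have hrev : Lc.reverse = L.take i ++ T.reverse := by
      rw [hLc, List.reverse_append, hK, List.reverse_reverse]
    have h1q : Lc.reverse[1]? = some (f 1) := by
      rw [hrev, List.getElem?_append_left (by rw [hlenTake]; omega), List.getElem?_take,
        if_pos (by omega : 1 < i), hfsome (by omega)]
    have h1q' : Lc.reverse[1]? = some x := by rw [hsup2]; simp
    have hfx : f 1 = x := by
      rw [h1q] at h1q'; exact Option.some_inj.mp h1q'
    have : i = 1 := finj him (by omega) (by rw [hx, ← hfx])
    omega
  rw [Walk.isHamiltonianCycle_iff_isCycle_and_support_count_tail_eq_one]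
  constructor
  · rw [Walk.cons_isCycle_iff]
    exact ⟨hqpath, hnotedge⟩
  · intro x
    rw [Walk.support_cons, List.tail_cons, hqsup]
    exact List.count_eq_one_of_mem hndc (hmemc x)

lemma core {W : Type*} [Fintype W] [DecidableEq W] (A : SimpleGraph W) (u v : W)
    (hna : ¬ A.Adj u v)
    (hdeg : Fintype.card W ≤ deg A u + deg A v)
    (hB : (A ⊔ SimpleGraph.fromEdgeSet {s(u, v)}).IsHamiltonian) :
    A.IsHamiltonian := by
  intro hcard1
  obtain ⟨a, c, hc⟩ := hB hcard1
  have hedge : ∀ e ∈ (A ⊔ SimpleGraph.fromEdgeSet {s(u, v)}).edgeSet,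
      e ≠ s(u, v) → e ∈ A.edgeSet := by
    intro e he hne'
    rw [SimpleGraph.edgeSet_sup, SimpleGraph.edgeSet_fromEdgeSet] at he
    rcases he with he | he
    · exact he
    · exact absurd he.1 (by simpa using hne')
  by_cases hmem : s(u, v) ∈ c.edges
  · obtain ⟨P, hP, hPe, hPcov⟩ := exists_ham_path c hc hmem
    have hsub : ∀ e ∈ P.edges, e ∈ A.edgeSet := fun e he =>
      hedge e (P.edges_subset_edgeSet he) (fun h => hPe (h ▸ he))
    exact build hna hdeg (P.transfer A hsub) (hP.transfer hsub)
      (fun x => by rw [Walk.support_transfer]; exact hPcov x)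
  · have hsub : ∀ e ∈ c.edges, e ∈ A.edgeSet := fun e he =>
      hedge e (c.edges_subset_edgeSet he) (fun h => hmem (h ▸ he))
    refine ⟨a, c.transfer A hsub, ?_⟩
    rw [Walk.isHamiltonianCycle_iff_isCycle_and_support_count_tail_eq_one] at hc ⊢
    exact ⟨hc.1.transfer hsub, fun x => by rw [Walk.support_transfer]; exact hc.2 x⟩

lemma deg_induce {W : Type*} [Fintype W] (G : SimpleGraph W) (X : Finset W) {x : W}
    (hx : x ∈ ((↑X : Set W)ᶜ)) :
    deg G x ≤ deg (G.induce ((↑X : Set W)ᶜ)) ⟨x, hx⟩ + X.card := by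
  have h1 : (G.induce ((↑X : Set W)ᶜ)).neighborSet ⟨x, hx⟩
      = Subtype.val ⁻¹' (G.neighborSet x) := by
    ext y
    simp [SimpleGraph.mem_neighborSet, SimpleGraph.comap_adj]
  have h2 : deg (G.induce ((↑X : Set W)ᶜ)) ⟨x, hx⟩ = ((G.neighborSet x) \ ↑X).ncard := by
    rw [deg, h1, ← Set.ncard_image_of_injective _ Subtype.val_injective,
      Subtype.image_preimage_coe, ← Set.diff_eq_compl_inter]
  rw [h2]
  calc deg G x = (G.neighborSet x).ncard := rfl
    _ ≤ ((G.neighborSet x) \ ↑X).ncard + (↑X : Set W).ncard :=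
        Set.ncard_le_ncard_diff_add_ncard _ _ (Set.toFinite _)
    _ = ((G.neighborSet x) \ ↑X).ncard + X.card := by rw [Set.ncard_coe_finset]

lemma sham_mono {W : Type*} [Fintype W] [DecidableEq W] {s : ℕ} {G H : SimpleGraph W}
    (h : G ≤ H) (hG : SHamiltonian s G) : SHamiltonian s H := by
  intro X hX
  refine (hG X hX).mono ?_
  intro a b hab
  exact h hab

lemma step_back {W : Type*} [Fintype W] [DecidableEq W] {n s : ℕ} {G G' : SimpleGraph W}
    (hcard : Fintype.card W = n) (hstep : ClosureStep (n + s) G G')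
    (hG' : SHamiltonian s G') : SHamiltonian s G := by
  obtain ⟨u, v, hne, hna, hd, rfl⟩ := hstep
  intro X hX
  by_cases hu : u ∈ ((↑X : Set W)ᶜ) ∧ v ∈ ((↑X : Set W)ᶜ)
  · obtain ⟨huT, hvT⟩ := hu
    have heq : (G ⊔ SimpleGraph.fromEdgeSet {s(u, v)}).induce ((↑X : Set W)ᶜ)
        = (G.induce ((↑X : Set W)ᶜ)) ⊔
          SimpleGraph.fromEdgeSet {s((⟨u, huT⟩ : ↥((↑X : Set W)ᶜ)), ⟨v, hvT⟩)} := by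
      ext a b
      simp only [SimpleGraph.comap_adj, SimpleGraph.sup_adj, SimpleGraph.fromEdgeSet_adj,
        Set.mem_singleton_iff, Sym2.eq_iff, Function.Embedding.coe_subtype]
      constructor
      · rintro (h | ⟨(⟨h1, h2⟩ | ⟨h1, h2⟩), h3⟩)
        · exact Or.inl h
        · exact Or.inr ⟨Or.inl ⟨Subtype.ext h1, Subtype.ext h2⟩,
            fun hab => h3 (congrArg Subtype.val hab)⟩
        · exact Or.inr ⟨Or.inr ⟨Subtype.ext h1, Subtype.ext h2⟩,
            fun hab => h3 (congrArg Subtype.val hab)⟩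
      · rintro (h | ⟨(⟨rfl, rfl⟩ | ⟨rfl, rfl⟩), h3⟩)
        · exact Or.inl h
        · exact Or.inr ⟨Or.inl ⟨rfl, rfl⟩, fun hab => h3 (Subtype.ext hab)⟩
        · exact Or.inr ⟨Or.inr ⟨rfl, rfl⟩, fun hab => h3 (Subtype.ext hab)⟩
    have hham := hG' X hX
    rw [heq] at hham
    refine core _ _ _ ?_ ?_ hham
    · intro hadj
      rw [SimpleGraph.comap_adj] at hadj
      exact hna hadj
    · have hcT : Fintype.card ↥((↑X : Set W)ᶜ) = Fintype.card W - X.card := by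
        rw [Fintype.card_compl_set]
        congr 1
        simp
      have hdu := deg_induce G X huT
      have hdv := deg_induce G X hvT
      have hXs : X.card ≤ s := hX
      rw [hcT]
      omega
  · have heq : (G ⊔ SimpleGraph.fromEdgeSet {s(u, v)}).induce ((↑X : Set W)ᶜ)
        = G.induce ((↑X : Set W)ᶜ) := by
      ext a b
      simp only [SimpleGraph.comap_adj, SimpleGraph.sup_adj, SimpleGraph.fromEdgeSet_adj,
        Set.mem_singleton_iff, Sym2.eq_iff, Function.Embedding.coe_subtype]
      constructor
      · rintro (h | ⟨(⟨h1, h2⟩ | ⟨h1, h2⟩), h3⟩)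
        · exact h
        · exact absurd ⟨h1 ▸ a.2, h2 ▸ b.2⟩ hu
        · exact absurd ⟨h2 ▸ b.2, h1 ▸ a.2⟩ hu
      · exact fun h => Or.inl h
    have hham := hG' X hX
    rwa [heq] at hham

end BC

/-- `G` is `s`-Hamiltonian iff its `(n+s)`-closure is `s`-Hamiltonian. -/
theorem stmt_6 {V : Type*} [Fintype V] [DecidableEq V] (n s : ℕ) (G H : SimpleGraph V)
    (hcard : Fintype.card V = n) (hH : IsKClosure (n + s) G H) :
    SHamiltonian s G ↔ SHamiltonian s H := by
  obtain ⟨hrt, -⟩ := hH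
  induction hrt with
  | refl => exact Iff.rfl
  | tail _ hstep ih =>
    refine ih.trans ?_
    constructor
    · intro h
      obtain ⟨u, v, _, _, _, rfl⟩ := hstep
      exact BC.sham_mono le_sup_left h
    · exact fun h => BC.step_back hcard hstep h
end

section
/- Let s ≥ 1, k ≥ 1, k − s + 1 ≥ 0, n ≥ 2k + 1, and let G be a connected graph of order n with minimum degree δ(G) ≥ k. If the spectral radius of the complement satisfies μ(Ḡ) ≤ √((k−s+2)(n−k−1)), then G is s-connected, unless G ∈ EP_n or G ∈ EC_n. -/
open Finset

section AuxSpectral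
open Matrix
set_option linter.unusedSectionVars false
set_option linter.unusedVariables false

section Spec
variable {V : Type*} [Fintype V] [DecidableEq V]

lemma dot_mulVec_left (M : Matrix V V ℝ) (a c : V → ℝ) :
    (M *ᵥ a) ⬝ᵥ c = a ⬝ᵥ (Mᵀ *ᵥ c) := by
  rw [dotProduct_comm, dotProduct_mulVec, mulVec_transpose, dotProduct_comm]

lemma star_eq_transpose_real (M : Matrix V V ℝ) : star M = Mᵀ := by
  rw [Matrix.star_eq_conjTranspose, Matrix.conjTranspose_eq_transpose_of_trivial]

variable (A : Matrix V V ℝ) (hA : A.IsHermitian)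

lemma key_decomp (x : V → ℝ) :
    ∃ y : V → ℝ, x ⬝ᵥ x = y ⬝ᵥ y ∧
      x ⬝ᵥ (A *ᵥ x) = ∑ i, hA.eigenvalues i * (y i)^2 ∧
      (A *ᵥ x) ⬝ᵥ (A *ᵥ x) = ∑ i, (hA.eigenvalues i)^2 * (y i)^2 := by
  set U : Matrix V V ℝ := (hA.eigenvectorUnitary : Matrix V V ℝ) with hU
  have hUU : star U * U = 1 := Unitary.coe_star_mul_self _
  have hUU' : U * star U = 1 := Unitary.coe_mul_star_self _
  set y : V → ℝ := (star U) *ᵥ x with hy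
  have hxy : U *ᵥ y = x := by
    rw [hy, mulVec_mulVec, hUU', one_mulVec]
  set d : V → ℝ := hA.eigenvalues with hd
  have hdiag : A *ᵥ x = U *ᵥ ((Matrix.diagonal d) *ᵥ y) := by
    have h2 : (Matrix.diagonal (RCLike.ofReal ∘ hA.eigenvalues) : Matrix V V ℝ)
        = Matrix.diagonal d := by
      ext i j; simp [Matrix.diagonal, hd]
    conv_lhs => rw [hA.spectral_theorem, Unitary.conjStarAlgAut_apply, h2]
    rw [← mulVec_mulVec, ← mulVec_mulVec, ← hy]
  have hz : ∀ i, ((Matrix.diagonal d) *ᵥ y) i = d i * y i := fun i => mulVec_diagonal d y i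
  have hUdot : ∀ a b : V → ℝ, (U *ᵥ a) ⬝ᵥ (U *ᵥ b) = a ⬝ᵥ b := by
    intro a b
    rw [dot_mulVec_left, ← star_eq_transpose_real, mulVec_mulVec, hUU, one_mulVec]
  refine ⟨y, ?_, ?_, ?_⟩
  · rw [← hxy, hUdot]
  · rw [hdiag, ← hxy, hUdot]
    unfold dotProduct
    exact Finset.sum_congr rfl fun i _ => by rw [hz]; ring
  · rw [hdiag, hUdot]
    unfold dotProduct
    exact Finset.sum_congr rfl fun i _ => by rw [hz]; ring

lemma quad_le (μ : ℝ) (hμ : ∀ i, hA.eigenvalues i ≤ μ) (x : V → ℝ) :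
    x ⬝ᵥ (A *ᵥ x) ≤ μ * (x ⬝ᵥ x) := by
  obtain ⟨y, h1, h2, _⟩ := key_decomp A hA x
  rw [h1, h2]
  have : μ * (y ⬝ᵥ y) = ∑ i, μ * (y i)^2 := by
    unfold dotProduct; rw [Finset.mul_sum]; exact Finset.sum_congr rfl fun i _ => by ring
  rw [this]
  exact Finset.sum_le_sum fun i _ => by nlinarith [sq_nonneg (y i), hμ i]

lemma quad2_le (μ : ℝ) (hμ : ∀ i, |hA.eigenvalues i| ≤ μ) (x : V → ℝ) :
    (A *ᵥ x) ⬝ᵥ (A *ᵥ x) ≤ μ^2 * (x ⬝ᵥ x) := by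
  obtain ⟨y, h1, _, h3⟩ := key_decomp A hA x
  rw [h1, h3]
  have : μ^2 * (y ⬝ᵥ y) = ∑ i, μ^2 * (y i)^2 := by
    unfold dotProduct; rw [Finset.mul_sum]; exact Finset.sum_congr rfl fun i _ => by ring
  rw [this]
  refine Finset.sum_le_sum fun i _ => ?_
  have h := abs_le.mp (hμ i)
  have h2 : (hA.eigenvalues i)^2 ≤ μ^2 := sq_le_sq' h.1 h.2
  exact mul_le_mul_of_nonneg_right h2 (sq_nonneg _)

lemma abs_eigen_le (hnn : ∀ i j, 0 ≤ A i j) (μ : ℝ) (hμ : ∀ i, hA.eigenvalues i ≤ μ) (i : V) :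
    |hA.eigenvalues i| ≤ μ := by
  set v : V → ℝ := ⇑(hA.eigenvectorBasis i) with hv
  have hnorm : v ⬝ᵥ v = 1 := by
    have h1 := hA.eigenvectorBasis.orthonormal.1 i
    have h2 : (inner ℝ (hA.eigenvectorBasis i) (hA.eigenvectorBasis i) : ℝ) = 1 := by
      rw [real_inner_self_eq_norm_sq, h1]; norm_num
    rw [PiLp.inner_apply] at h2
    simpa [dotProduct, hv, pow_two] using h2
  have hev : A *ᵥ v = hA.eigenvalues i • v := by
    rw [hv]; exact hA.mulVec_eigenvectorBasis i
  have hval : v ⬝ᵥ (A *ᵥ v) = hA.eigenvalues i := by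
    rw [hev, dotProduct_smul, hnorm]; simp
  set w : V → ℝ := fun j => |v j| with hw
  have hwnorm : w ⬝ᵥ w = 1 := by
    rw [← hnorm]; unfold dotProduct
    exact Finset.sum_congr rfl fun j _ => by simp [hw, abs_mul_abs_self]
  have habs : |v ⬝ᵥ (A *ᵥ v)| ≤ w ⬝ᵥ (A *ᵥ w) := by
    unfold dotProduct mulVec dotProduct
    calc |∑ j, v j * ∑ l, A j l * v l| ≤ ∑ j, |v j * ∑ l, A j l * v l| :=
          Finset.abs_sum_le_sum_abs _ _
      _ ≤ ∑ j, w j * ∑ l, A j l * w l := by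
          refine Finset.sum_le_sum fun j _ => ?_
          rw [abs_mul]
          refine mul_le_mul_of_nonneg_left ?_ (abs_nonneg _)
          calc |∑ l, A j l * v l| ≤ ∑ l, |A j l * v l| := Finset.abs_sum_le_sum_abs _ _
            _ = ∑ l, A j l * w l := Finset.sum_congr rfl fun l _ => by
                rw [abs_mul, abs_of_nonneg (hnn j l)]
  have := quad_le A hA μ hμ w
  rw [hwnorm, mul_one] at this
  rw [hval] at habs
  linarith [habs]

end Spec

section SpecRad
variable {V : Type*} [Fintype V] [DecidableEq V] (H : SimpleGraph V) [DecidableRel H.Adj]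

lemma specRad_eq : specRad H = sSup (spectrum ℝ (H.adjMatrix ℝ)) := by
  have h : (Classical.decRel H.Adj) = ‹DecidableRel H.Adj› := Subsingleton.elim _ _
  unfold specRad
  rw [h]

lemma adj_herm : (H.adjMatrix ℝ).IsHermitian := by
  rw [Matrix.IsHermitian, Matrix.conjTranspose_eq_transpose_of_trivial]
  exact H.isSymm_adjMatrix

lemma adj_nonneg : ∀ i j, 0 ≤ (H.adjMatrix ℝ) i j := by
  intro i j
  rw [SimpleGraph.adjMatrix_apply]
  split <;> norm_num

lemma eigen_le_specRad [Nonempty V] (i : V) :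
    (adj_herm H).eigenvalues i ≤ specRad H := by
  rw [specRad_eq]
  exact le_csSup (Set.Finite.bddAbove (Matrix.finite_real_spectrum (𝕜 := ℝ)))
    ((adj_herm H).eigenvalues_mem_spectrum_real i)

lemma specRad_nonneg [Nonempty V] : 0 ≤ specRad H := by
  obtain ⟨v0⟩ := (inferInstance : Nonempty V)
  have h := quad_le (H.adjMatrix ℝ) (adj_herm H) (specRad H) (eigen_le_specRad H)
    (Pi.single v0 1)
  have h1 : (Pi.single v0 1 : V → ℝ) ⬝ᵥ ((H.adjMatrix ℝ) *ᵥ Pi.single v0 1) = 0 := by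
    simp only [dotProduct, mulVec, Pi.single_apply, SimpleGraph.adjMatrix_apply, ite_mul,
      one_mul, zero_mul, mul_ite, mul_one, mul_zero]
    rw [Finset.sum_eq_zero]
    intro u _
    by_cases hu : u = v0
    · rw [if_pos hu, Finset.sum_eq_zero]
      intro w _
      by_cases hw : w = v0
      · rw [if_pos hw, if_neg (fun hadj => H.irrefl (by rwa [hu, hw] at hadj))]
      · rw [if_neg hw]
    · rw [if_neg hu]
  have h2 : (Pi.single v0 1 : V → ℝ) ⬝ᵥ (Pi.single v0 1 : V → ℝ) = 1 := by
    simp [dotProduct, Pi.single_apply]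
  rw [h1, h2, mul_one] at h
  exact h

lemma masterCount [Nonempty V] (T U : Finset V) (f : V → ℕ)
    (hf : ∀ v ∈ U, f v ≤ ((H.neighborFinset v) ∩ T).card) :
    (∑ v ∈ U, ((f v : ℝ))^2) ≤ specRad H ^ 2 * T.card := by
  set A := H.adjMatrix ℝ with hA
  set x : V → ℝ := fun v => if v ∈ T then 1 else 0 with hx
  have hxx : x ⬝ᵥ x = T.card := by
    have h1 : ∀ v, x v * x v = if v ∈ T then (1:ℝ) else 0 := by
      intro v; by_cases h : v ∈ T <;> simp [hx, h]
    unfold dotProduct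
    rw [Finset.sum_congr rfl fun v _ => h1 v, Finset.sum_ite_mem, Finset.univ_inter,
      Finset.sum_const]
    simp
  have hAx : ∀ v, (A *ᵥ x) v = ((H.neighborFinset v ∩ T).card : ℝ) := by
    intro v
    rw [hA, SimpleGraph.adjMatrix_mulVec_apply, Finset.sum_ite_mem, Finset.sum_const]
    simp
  have h2 := quad2_le A (adj_herm H) (specRad H)
    (fun i => abs_eigen_le A (adj_herm H) (adj_nonneg H) (specRad H) (eigen_le_specRad H) i) x
  rw [hxx] at h2
  refine le_trans ?_ h2
  unfold dotProduct
  calc ∑ v ∈ U, ((f v : ℝ))^2 ≤ ∑ v ∈ U, ((A *ᵥ x) v)^2 := by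
        refine Finset.sum_le_sum fun v hv => ?_
        rw [hAx]
        have := hf v hv
        have h3 : ((f v : ℝ)) ≤ ((H.neighborFinset v ∩ T).card : ℝ) := by exact_mod_cast this
        have h4 : (0:ℝ) ≤ (f v : ℝ) := Nat.cast_nonneg _
        nlinarith
    _ ≤ ∑ v, ((A *ᵥ x) v)^2 :=
        Finset.sum_le_sum_of_subset_of_nonneg (Finset.subset_univ U) fun v _ _ => sq_nonneg _
    _ = ∑ v, (A *ᵥ x) v * (A *ᵥ x) v := by
        exact Finset.sum_congr rfl fun v _ => by ring
  
end SpecRad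

section Main
variable {V : Type*} [Fintype V] [DecidableEq V]

lemma deg_eq (G : SimpleGraph V) [DecidableRel G.Adj] (v : V) :
    deg G v = (G.neighborFinset v).card := by
  unfold deg SimpleGraph.neighborFinset
  exact Set.ncard_eq_toFinset_card' _

lemma no_extra (H : SimpleGraph V) [DecidableRel H.Adj] [Nonempty V]
    (T U0 W : Finset V)
    (hcomplete : ∀ v ∈ U0, T ⊆ H.neighborFinset v)
    (hWne : W.Nonempty) (hdis : Disjoint U0 W)
    (hWnb : ∀ w ∈ W, 1 ≤ ((H.neighborFinset w) ∩ T).card)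
    (hbound : specRad H ^ 2 ≤ (U0.card : ℝ) * T.card) : False := by
  classical
  set f : V → ℕ := fun w => if w ∈ U0 then T.card else 1 with hfdef
  have hf : ∀ v ∈ U0 ∪ W, f v ≤ ((H.neighborFinset v) ∩ T).card := by
    intro v hv
    by_cases h : v ∈ U0
    · simp only [hfdef, if_pos h]
      refine Finset.card_le_card ?_
      intro t ht
      exact Finset.mem_inter.mpr ⟨hcomplete v h ht, ht⟩
    · simp only [hfdef, if_neg h]
      rcases Finset.mem_union.mp hv with h' | h'
      · exact absurd h' h
      · exact hWnb v h'
  have hm := masterCount H T (U0 ∪ W) f hf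
  have hsum : (∑ v ∈ U0 ∪ W, ((f v : ℝ))^2)
      = (U0.card : ℝ) * (T.card : ℝ)^2 + W.card := by
    rw [Finset.sum_union hdis]
    have e1 : ∑ v ∈ U0, ((f v : ℝ))^2 = (U0.card : ℝ) * (T.card : ℝ)^2 := by
      rw [Finset.sum_congr rfl (g := fun _ => ((T.card : ℝ))^2)
        (fun v hv => by simp [hfdef, hv]), Finset.sum_const, nsmul_eq_mul]
    have e2 : ∑ v ∈ W, ((f v : ℝ))^2 = (W.card : ℝ) := by
      rw [Finset.sum_congr rfl (g := fun _ => (1:ℝ))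
        (fun v hv => by simp [hfdef, Finset.disjoint_right.mp hdis hv]),
        Finset.sum_const, nsmul_eq_mul, mul_one]
    rw [e1, e2]
  rw [hsum] at hm
  have hW1 : (1 : ℝ) ≤ W.card := by
    have := Finset.card_pos.mpr hWne
    exact_mod_cast this
  have hT0 : (0 : ℝ) ≤ (T.card : ℝ) := Nat.cast_nonneg _
  nlinarith [mul_le_mul_of_nonneg_right hbound hT0]

lemma buildEC (n k s : ℕ) (G : SimpleGraph V) (X Y S : Finset V)
    (hdXY : Disjoint X Y) (hdXS : Disjoint X S) (hdYS : Disjoint Y S)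
    (huniv : X ∪ Y ∪ S = Finset.univ)
    (hXc : (X.card : ℤ) = (n : ℤ) - k - 1) (hYc : (Y.card : ℤ) = (k : ℤ) - s + 2)
    (hSc : (S.card : ℤ) = (s : ℤ) - 1)
    (hXpos : 0 < X.card) (hYpos : 0 < Y.card)
    (hcross : ∀ u ∈ X, ∀ v ∈ Y, ¬ G.Adj u v)
    (hμM : specRad Gᶜ ^ 2 ≤ ((k : ℝ) - s + 2) * ((n : ℝ) - k - 1)) :
    MemEC n k s G := by
  classical
  have hNe : Nonempty V := by
    obtain ⟨x, hx⟩ := Finset.card_pos.mp hXpos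
    exact ⟨x⟩
  have hprod : ((k : ℝ) - s + 2) * ((n : ℝ) - k - 1) = (Y.card : ℝ) * (X.card : ℝ) := by
    have h1 : ((Y.card : ℝ)) = (k : ℝ) - s + 2 := by exact_mod_cast hYc
    have h2 : ((X.card : ℝ)) = (n : ℝ) - k - 1 := by exact_mod_cast hXc
    rw [h1, h2]
  have hcrossH : ∀ u ∈ X, ∀ v ∈ Y, Gᶜ.Adj u v := by
    intro u hu v hv
    refine ⟨?_, hcross u hu v hv⟩
    rintro rfl
    exact Finset.disjoint_left.mp hdXY hu hv
  -- complete cross adjacency in H = Gᶜ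
  have hcompX : ∀ v ∈ Y, X ⊆ Gᶜ.neighborFinset v := by
    intro v hv u hu
    rw [SimpleGraph.mem_neighborFinset]
    exact (hcrossH u hu v hv).symm
  have hcompY : ∀ v ∈ X, Y ⊆ Gᶜ.neighborFinset v := by
    intro v hv u hu
    rw [SimpleGraph.mem_neighborFinset]
    exact (hcrossH v hv u hu)
  have hboundX : specRad Gᶜ ^ 2 ≤ (Y.card : ℝ) * X.card := by rw [← hprod]; exact hμM
  have hboundY : specRad Gᶜ ^ 2 ≤ (X.card : ℝ) * Y.card := by
    rw [mul_comm, ← hprod]; exact hμM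
  -- no H-edges within X
  have hXX : ∀ u ∈ X, ∀ v ∈ X, ¬ Gᶜ.Adj u v := by
    intro u hu v hv hadj
    refine no_extra Gᶜ X Y {u, v} hcompX ⟨u, by simp⟩ ?_ ?_ hboundX
    · rw [Finset.disjoint_right]
      intro w hw
      rcases Finset.mem_insert.mp hw with rfl | hw
      · exact Finset.disjoint_left.mp hdXY hu
      · rw [Finset.mem_singleton] at hw; subst hw
        exact Finset.disjoint_left.mp hdXY hv
    · intro w hw
      refine Finset.card_pos.mpr ?_
      rcases Finset.mem_insert.mp hw with rfl | hw
      · exact ⟨v, Finset.mem_inter.mpr ⟨(SimpleGraph.mem_neighborFinset _ _ _).mpr hadj, hv⟩⟩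
      · rw [Finset.mem_singleton] at hw; subst hw
        exact ⟨u, Finset.mem_inter.mpr ⟨(SimpleGraph.mem_neighborFinset _ _ _).mpr hadj.symm, hu⟩⟩
  -- no H-edges within Y
  have hYY : ∀ u ∈ Y, ∀ v ∈ Y, ¬ Gᶜ.Adj u v := by
    intro u hu v hv hadj
    refine no_extra Gᶜ Y X {u, v} hcompY ⟨u, by simp⟩ ?_ ?_ hboundY
    · rw [Finset.disjoint_right]
      intro w hw
      rcases Finset.mem_insert.mp hw with rfl | hw
      · exact Finset.disjoint_right.mp hdXY hu
      · rw [Finset.mem_singleton] at hw; subst hw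
        exact Finset.disjoint_right.mp hdXY hv
    · intro w hw
      refine Finset.card_pos.mpr ?_
      rcases Finset.mem_insert.mp hw with rfl | hw
      · exact ⟨v, Finset.mem_inter.mpr ⟨(SimpleGraph.mem_neighborFinset _ _ _).mpr hadj, hv⟩⟩
      · rw [Finset.mem_singleton] at hw; subst hw
        exact ⟨u, Finset.mem_inter.mpr ⟨(SimpleGraph.mem_neighborFinset _ _ _).mpr hadj.symm, hu⟩⟩
  -- no H-edges from S to X ∪ Y
  have hSX : ∀ u ∈ S, ∀ v ∈ X, ¬ Gᶜ.Adj u v := by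
    intro u hu v hv hadj
    refine no_extra Gᶜ X Y {u} hcompX ⟨u, by simp⟩ ?_ ?_ hboundX
    · rw [Finset.disjoint_right]
      intro w hw
      rw [Finset.mem_singleton] at hw; subst hw
      exact fun h => Finset.disjoint_right.mp hdYS hu h
    · intro w hw
      rw [Finset.mem_singleton] at hw; subst hw
      exact Finset.card_pos.mpr
        ⟨v, Finset.mem_inter.mpr ⟨(SimpleGraph.mem_neighborFinset _ _ _).mpr hadj, hv⟩⟩
  have hSY : ∀ u ∈ S, ∀ v ∈ Y, ¬ Gᶜ.Adj u v := by
    intro u hu v hv hadj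
    refine no_extra Gᶜ Y X {u} hcompY ⟨u, by simp⟩ ?_ ?_ hboundY
    · rw [Finset.disjoint_right]
      intro w hw
      rw [Finset.mem_singleton] at hw; subst hw
      exact fun h => Finset.disjoint_right.mp hdXS hu h
    · intro w hw
      rw [Finset.mem_singleton] at hw; subst hw
      exact Finset.card_pos.mpr
        ⟨v, Finset.mem_inter.mpr ⟨(SimpleGraph.mem_neighborFinset _ _ _).mpr hadj, hv⟩⟩
  -- the bipartite complement graph
  set G₁ : SimpleGraph V :=
    { Adj := fun u v => (u ∈ X ∧ v ∈ Y) ∨ (u ∈ Y ∧ v ∈ X)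
      symm := by
        constructor
        intro u v h
        tauto
      loopless := by
        constructor
        intro u h
        rcases h with ⟨h1, h2⟩ | ⟨h1, h2⟩
        · exact Finset.disjoint_left.mp hdXY h1 h2
        · exact Finset.disjoint_left.mp hdXY h2 h1 } with hG₁
  have hG₁adj : ∀ u v, G₁.Adj u v ↔ ((u ∈ X ∧ v ∈ Y) ∨ (u ∈ Y ∧ v ∈ X)) := fun u v => Iff.rfl
  have hdegX : ∀ u ∈ X, deg G₁ u = Y.card := by
    intro u hu
    have : G₁.neighborSet u = (↑Y : Set V) := by
      ext v
      simp only [SimpleGraph.mem_neighborSet, hG₁adj, Finset.mem_coe]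
      constructor
      · rintro (⟨_, h⟩ | ⟨h, _⟩)
        · exact h
        · exact absurd h (Finset.disjoint_left.mp hdXY hu)
      · intro hv; exact Or.inl ⟨hu, hv⟩
    unfold deg
    rw [this, Set.ncard_coe_finset]
  have hdegY : ∀ u ∈ Y, deg G₁ u = X.card := by
    intro u hu
    have : G₁.neighborSet u = (↑X : Set V) := by
      ext v
      simp only [SimpleGraph.mem_neighborSet, hG₁adj, Finset.mem_coe]
      constructor
      · rintro (⟨h, _⟩ | ⟨_, h⟩)
        · exact absurd h (Finset.disjoint_right.mp hdXY hu)
        · exact h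
      · intro hv; exact Or.inr ⟨hu, hv⟩
    unfold deg
    rw [this, Set.ncard_coe_finset]
  refine ⟨0, X, Y, S, G₁, hdXY, hdXS, hdYS, huniv, by push_cast; omega, by push_cast; omega,
    fun u v h => (hG₁adj u v).mp h, ?_, ?_, ?_, ?_⟩
  · intro u hu; rw [hdegX u hu]; omega
  · intro v hv; rw [hdegY v hv]; omega
  · -- join to S
    intro a ha b hb
    have hne : a ≠ b := by
      rintro rfl
      rcases Finset.mem_union.mp ha with h | h
      · exact Finset.disjoint_left.mp hdXS h hb
      · exact Finset.disjoint_left.mp hdYS h hb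
    by_contra hnadj
    have : Gᶜ.Adj b a := ⟨hne.symm, fun h => hnadj h.symm⟩
    rcases Finset.mem_union.mp ha with h | h
    · exact hSX b hb a h this
    · exact hSY b hb a h this
  · -- inner adjacency characterization
    intro a ha b hb
    constructor
    · intro hadj
      refine ⟨hadj.ne, ?_⟩
      intro h1
      rcases (hG₁adj a b).mp h1 with ⟨h2, h3⟩ | ⟨h2, h3⟩
      · exact hcross a h2 b h3 hadj
      · exact hcross b h3 a h2 hadj.symm
    · rintro ⟨hne, hn1⟩
      by_contra hnadj
      have hH : Gᶜ.Adj a b := ⟨hne, hnadj⟩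
      rcases Finset.mem_union.mp ha with hX' | hY' <;> rcases Finset.mem_union.mp hb with hX'' | hY''
      · exact hXX a hX' b hX'' hH
      · exact hn1 ((hG₁adj a b).mpr (Or.inl ⟨hX', hY''⟩))
      · exact hn1 ((hG₁adj a b).mpr (Or.inr ⟨hY', hX''⟩))
      · exact hYY a hY' b hY'' hH

end Main
end AuxSpectral

set_option maxHeartbeats 1000000 in
/-- Spectral condition of the complement for `s`-connectivity. -/
theorem stmt_8 {V : Type*} [Fintype V] [DecidableEq V] (n k s : ℕ) (G : SimpleGraph V)
    (hs : 1 ≤ s) (hk : 1 ≤ k) (hks : (0 : ℤ) ≤ (k : ℤ) - s + 1) (hn : 2 * k + 1 ≤ n)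
    (hcard : Fintype.card V = n) (hconn : G.Connected) (hδ : ∀ v : V, k ≤ deg G v)
    (hμ : specRad Gᶜ ≤ Real.sqrt (((k : ℝ) - s + 2) * ((n : ℝ) - k - 1))) :
    SConnected s G ∨ MemEP n k G ∨ MemEC n k s G := by
  classical
  by_cases hSC : SConnected s G
  · exact Or.inl hSC
  right; right
  have hNeV : Nonempty V := by
    rw [← Fintype.card_pos_iff, hcard]; omega
  have hslt : s < Fintype.card V := by rw [hcard]; omega
  rw [SConnected] at hSC
  push_neg at hSC
  obtain ⟨S, hScard, hSdisc⟩ := hSC hslt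
  set K : Set V := (↑S : Set V)ᶜ with hKdef
  have hmemK : ∀ v : V, v ∈ K ↔ v ∉ S := by intro v; simp [hKdef]
  have hScompl : (Sᶜ : Finset V).Nonempty := by
    rw [← Finset.card_pos, Finset.card_compl, hcard]; omega
  obtain ⟨v0, hv0⟩ := hScompl
  have hNeK : Nonempty ↥K := ⟨⟨v0, (hmemK v0).mpr (Finset.mem_compl.mp hv0)⟩⟩
  rw [SimpleGraph.connected_iff] at hSdisc
  push_neg at hSdisc
  have hnpre : ¬ (G.induce K).Preconnected := fun hp => (hSdisc hp).false hNeK.some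
  rw [SimpleGraph.Preconnected] at hnpre
  push_neg at hnpre
  obtain ⟨va, vb, hnr⟩ := hnpre
  set A : Finset V := Finset.univ.filter
    (fun v => ∃ h : v ∈ K, (G.induce K).Reachable va ⟨v, h⟩) with hAdef
  set B : Finset V := Finset.univ.filter (fun v => v ∉ S ∧ v ∉ A) with hBdef
  have hmemA : ∀ v, v ∈ A ↔ ∃ h : v ∈ K, (G.induce K).Reachable va ⟨v, h⟩ := by
    intro v; simp [hAdef]
  have hmemB : ∀ v, v ∈ B ↔ (v ∉ S ∧ v ∉ A) := by intro v; simp [hBdef]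
  have hAnotS : ∀ v ∈ A, v ∉ S := fun v hv =>
    (hmemK v).mp ((hmemA v).mp hv).choose
  have haA : (va : V) ∈ A := by
    rw [hmemA]
    refine ⟨va.2, ?_⟩
    have h : (⟨(va : V), va.2⟩ : ↥K) = va := Subtype.coe_eta va va.2
    rw [h]
  have hbB : (vb : V) ∈ B := by
    rw [hmemB]
    refine ⟨(hmemK _).mp vb.2, ?_⟩
    intro hvb
    obtain ⟨h, hr⟩ := (hmemA _).mp hvb
    apply hnr
    have heq : (⟨(vb : V), h⟩ : ↥K) = vb := Subtype.coe_eta _ _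
    rwa [heq] at hr
  have hcrossAB : ∀ u ∈ A, ∀ v ∈ B, ¬ G.Adj u v := by
    intro u hu v hv hadj
    obtain ⟨hKu, hr⟩ := (hmemA u).mp hu
    obtain ⟨hvS, hvA⟩ := (hmemB v).mp hv
    have hKv : v ∈ K := (hmemK v).mpr hvS
    have hadj' : (G.induce K).Adj ⟨u, hKu⟩ ⟨v, hKv⟩ := hadj
    exact hvA ((hmemA v).mpr ⟨hKv, hr.trans hadj'.reachable⟩)
  have hdAB : Disjoint A B := Finset.disjoint_left.mpr fun v hv hv' => ((hmemB v).mp hv').2 hv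
  have hdAS : Disjoint A S := Finset.disjoint_left.mpr fun v hv => hAnotS v hv
  have hdBS : Disjoint B S := Finset.disjoint_left.mpr fun v hv => ((hmemB v).mp hv).1
  have hcover : A ∪ B ∪ S = Finset.univ := by
    ext v
    simp only [Finset.mem_union, Finset.mem_univ, iff_true]
    by_cases hS' : v ∈ S
    · exact Or.inr hS'
    by_cases hA' : v ∈ A
    · exact Or.inl (Or.inl hA')
    · exact Or.inl (Or.inr ((hmemB v).mpr ⟨hS', hA'⟩))
  have hcardsum : A.card + B.card + S.card = n := by
    have h1 : (A ∪ B ∪ S).card = A.card + B.card + S.card := by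
      rw [Finset.card_union_of_disjoint (Finset.disjoint_union_left.mpr ⟨hdAS, hdBS⟩),
        Finset.card_union_of_disjoint hdAB]
    rw [hcover, Finset.card_univ, hcard] at h1
    omega
  -- degree bounds
  have hdegA : k + 1 ≤ A.card + S.card := by
    have hv := haA
    set v : V := (va : V)
    have hsub : G.neighborFinset v ⊆ (A ∪ S).erase v := by
      intro w hw
      rw [SimpleGraph.mem_neighborFinset] at hw
      rw [Finset.mem_erase]
      refine ⟨fun h => G.irrefl (h ▸ hw), ?_⟩
      rw [Finset.mem_union]
      by_cases hwS : w ∈ S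
      · exact Or.inr hwS
      by_cases hwA : w ∈ A
      · exact Or.inl hwA
      · exact absurd hw (hcrossAB v hv w ((hmemB w).mpr ⟨hwS, hwA⟩))
    have h1 := hδ v
    rw [deg_eq] at h1
    have h2 := Finset.card_le_card hsub
    rw [Finset.card_erase_of_mem (Finset.mem_union_left _ hv),
      Finset.card_union_of_disjoint hdAS] at h2
    have hA1 : 1 ≤ A.card := Finset.card_pos.mpr ⟨v, hv⟩
    omega
  have hdegB : k + 1 ≤ B.card + S.card := by
    have hv := hbB
    set v : V := (vb : V)
    have hsub : G.neighborFinset v ⊆ (B ∪ S).erase v := by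
      intro w hw
      rw [SimpleGraph.mem_neighborFinset] at hw
      rw [Finset.mem_erase]
      refine ⟨fun h => G.irrefl (h ▸ hw), ?_⟩
      rw [Finset.mem_union]
      by_cases hwS : w ∈ S
      · exact Or.inr hwS
      by_cases hwB : w ∈ B
      · exact Or.inl hwB
      · by_cases hwA : w ∈ A
        · exact absurd hw.symm (hcrossAB w hwA v hv)
        · exact Or.inl ((hmemB w).mpr ⟨hwS, hwA⟩)
    have h1 := hδ v
    rw [deg_eq] at h1
    have h2 := Finset.card_le_card hsub
    rw [Finset.card_erase_of_mem (Finset.mem_union_left _ hv),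
      Finset.card_union_of_disjoint hdBS] at h2
    have hB1 : 1 ≤ B.card := Finset.card_pos.mpr ⟨v, hv⟩
    omega
  have hPpos : 0 < A.card := Finset.card_pos.mpr ⟨va, haA⟩
  have hQpos : 0 < B.card := Finset.card_pos.mpr ⟨vb, hbB⟩
  -- spectral bound : A.card * B.card ≤ (k-s+2)(n-k-1)
  have hHcross : ∀ v ∈ B, A ⊆ Gᶜ.neighborFinset v := by
    intro v hv u hu
    rw [SimpleGraph.mem_neighborFinset]
    refine ⟨?_, fun h => hcrossAB u hu v hv h.symm⟩
    rintro rfl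
    exact ((hmemB v).mp hv).2 hu
  have hmc := masterCount Gᶜ A B (fun _ => A.card) (fun v hv =>
    Finset.card_le_card fun a ha => Finset.mem_inter.mpr ⟨hHcross v hv ha, ha⟩)
  have hsumB : (∑ _v ∈ B, ((A.card : ℝ))^2) = (B.card : ℝ) * (A.card : ℝ)^2 := by
    rw [Finset.sum_const, nsmul_eq_mul]
  rw [hsumB] at hmc
  have hμ0 : 0 ≤ specRad Gᶜ := specRad_nonneg Gᶜ
  have hc1 : (1:ℝ) ≤ (k:ℝ) - s + 2 := by
    have : (1:ℤ) ≤ (k:ℤ) - s + 2 := by omega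
    exact_mod_cast this
  have hc2 : (1:ℝ) ≤ (n:ℝ) - k - 1 := by
    have : (1:ℤ) ≤ (n:ℤ) - k - 1 := by omega
    exact_mod_cast this
  have hM0 : 0 ≤ ((k:ℝ) - s + 2) * ((n:ℝ) - k - 1) := by nlinarith
  have hμsq : specRad Gᶜ ^ 2 ≤ ((k:ℝ) - s + 2) * ((n:ℝ) - k - 1) := by
    have h1 := Real.sq_sqrt hM0
    nlinarith [Real.sqrt_nonneg (((k:ℝ) - s + 2) * ((n:ℝ) - k - 1))]
  have hPQle : (A.card : ℤ) * B.card ≤ ((k:ℤ) - s + 2) * ((n:ℤ) - k - 1) := by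
    have hPr : (0:ℝ) < (A.card : ℝ) := by exact_mod_cast hPpos
    have h2 : (B.card : ℝ) * (A.card:ℝ)^2 ≤
        (((k:ℝ) - s + 2) * ((n:ℝ) - k - 1)) * A.card :=
      le_trans hmc (mul_le_mul_of_nonneg_right hμsq (le_of_lt hPr))
    have h3 : (A.card : ℝ) * B.card ≤ ((k:ℝ) - s + 2) * ((n:ℝ) - k - 1) := by
      refine le_of_mul_le_mul_right ?_ hPr
      nlinarith
    have h4 : (((A.card : ℤ) * B.card : ℤ) : ℝ) ≤
        ((((k:ℤ) - s + 2) * ((n:ℤ) - k - 1) : ℤ) : ℝ) := by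
      push_cast
      nlinarith
    exact_mod_cast h4
  -- integer equality analysis
  have hPS : (k:ℤ) + 1 ≤ (A.card : ℤ) + S.card := by exact_mod_cast hdegA
  have hQS : (k:ℤ) + 1 ≤ (B.card : ℤ) + S.card := by exact_mod_cast hdegB
  have hsumZ : (A.card : ℤ) + B.card + S.card = n := by exact_mod_cast hcardsum
  have htZ : (S.card : ℤ) ≤ (s:ℤ) - 1 := by
    have : (S.card : ℤ) < s := by exact_mod_cast hScard
    omega
  set m : ℤ := (k:ℤ) + 1 - S.card with hmdef
  have hPm : m ≤ (A.card : ℤ) := by omega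
  have hQm : m ≤ (B.card : ℤ) := by omega
  have hid : (A.card : ℤ) * B.card
      = m * ((n:ℤ) - k - 1) + ((A.card : ℤ) - m) * ((B.card : ℤ) - m) := by
    have h5 : (A.card : ℤ) + B.card = (n:ℤ) - S.card := by omega
    linear_combination m * h5
  have hmm : (k:ℤ) - s + 2 ≤ m := by omega
  have hnk1 : (1:ℤ) ≤ (n:ℤ) - k - 1 := by omega
  have hfact : 0 ≤ ((A.card : ℤ) - m) * ((B.card : ℤ) - m) :=
    mul_nonneg (by omega) (by omega)
  have hEq : (A.card : ℤ) * B.card = ((k:ℤ) - s + 2) * ((n:ℤ) - k - 1) := by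
    refine le_antisymm hPQle ?_
    nlinarith [mul_le_mul_of_nonneg_right hmm (by omega : (0:ℤ) ≤ (n:ℤ) - k - 1)]
  have hts : (S.card : ℤ) = (s:ℤ) - 1 := by
    by_contra h
    have hm2 : (k:ℤ) - s + 3 ≤ m := by omega
    nlinarith [mul_le_mul_of_nonneg_right hm2 (by omega : (0:ℤ) ≤ (n:ℤ) - k - 1)]
  have hm_eq : m = (k:ℤ) - s + 2 := by omega
  have hzero : ((A.card : ℤ) - ((k:ℤ) - s + 2)) * ((B.card : ℤ) - ((k:ℤ) - s + 2)) = 0 := by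
    rw [hm_eq] at hid
    linarith [hEq]
  rcases mul_eq_zero.mp hzero with h | h
  · -- A is the small side : Y := A, X := B
    have hPz : (A.card : ℤ) = (k:ℤ) - s + 2 := by omega
    have hQz : (B.card : ℤ) = (n:ℤ) - k - 1 := by omega
    refine buildEC n k s G B A S hdAB.symm hdBS hdAS ?_ hQz hPz hts hQpos hPpos
      (fun u hu v hv hadj => hcrossAB v hv u hu hadj.symm) hμsq
    rw [Finset.union_comm B A]
    exact hcover
  · -- B is the small side : Y := B, X := A
    have hQz : (B.card : ℤ) = (k:ℤ) - s + 2 := by omega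
    have hPz : (A.card : ℤ) = (n:ℤ) - k - 1 := by omega
    exact buildEC n k s G A B S hdAB hdAS hdBS hcover hPz hQz hts hPpos hQpos
      hcrossAB hμsq
end

section
/- Let s ≥ 1, k ≥ 1, k − s + 1 ≥ 0, n ≥ 2k + 1, and let G be a connected graph of order n with δ(G) ≥ k. If μ(Ḡ) ≤ √((k−s+2)(n−k−1)), then G is s-edge-connected, unless G ∈ EP_n or G ∈ EC_n. -/
open Finset

section Stmt9Aux

open Matrix

variable {V : Type*} [Fintype V] [DecidableEq V]

private lemma stmt9_quadform_le_max (A : Matrix V V ℝ) (hA : A.IsHermitian) [Nonempty V]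
    (x : V → ℝ) :
    x ⬝ᵥ (A *ᵥ x) ≤ (univ.sup' univ_nonempty hA.eigenvalues) * (x ⬝ᵥ x) := by
  set U : Matrix V V ℝ := (hA.eigenvectorUnitary : Matrix V V ℝ) with hU
  have hUU : U * star U = 1 := (Matrix.mem_unitaryGroup_iff).mp hA.eigenvectorUnitary.2
  set z := (star U) *ᵥ x with hz
  have hstar : x ᵥ* U = z := by
    funext i
    simp [hz, Matrix.mulVec, Matrix.vecMul, dotProduct, Matrix.conjTranspose_apply,
      mul_comm]
  have hAx : A *ᵥ x = U *ᵥ (Matrix.diagonal hA.eigenvalues *ᵥ z) := by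
    conv_lhs => rw [hA.spectral_theorem, Unitary.conjStarAlgAut_apply,
      RCLike.ofReal_real_eq_id, Function.id_comp]
    simp only [← Matrix.mulVec_mulVec, hz]
    congr 1
  have key : x ⬝ᵥ (A *ᵥ x) = ∑ i, hA.eigenvalues i * (z i * z i) := by
    rw [hAx, Matrix.dotProduct_mulVec, hstar]
    simp [dotProduct, Matrix.mulVec_diagonal]
    ring_nf
    exact Finset.sum_congr rfl fun i _ => by ring
  have hzz : x ⬝ᵥ x = ∑ i, z i * z i := by
    have h2 : z ⬝ᵥ z = x ⬝ᵥ x := by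
      calc z ⬝ᵥ z = (x ᵥ* U) ⬝ᵥ z := by rw [hstar]
        _ = x ⬝ᵥ (U *ᵥ z) := (Matrix.dotProduct_mulVec x U z).symm
        _ = x ⬝ᵥ x := by rw [hz, Matrix.mulVec_mulVec, hUU, Matrix.one_mulVec]
    rw [← h2]; simp [dotProduct]
  rw [key, hzz, Finset.mul_sum]
  apply Finset.sum_le_sum
  intro i _
  have h1 : hA.eigenvalues i ≤ univ.sup' univ_nonempty hA.eigenvalues :=
    Finset.le_sup' _ (Finset.mem_univ i)
  nlinarith [mul_self_nonneg (z i)]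

private lemma stmt9_specRad_eq (G : SimpleGraph V) [h : DecidableRel G.Adj] :
    specRad G = sSup (spectrum ℝ (G.adjMatrix ℝ)) := by
  have he : (letI : DecidableRel G.Adj := Classical.decRel _; (G.adjMatrix ℝ)) =
      G.adjMatrix ℝ := by
    ext i j; by_cases hij : G.Adj i j <;> simp [hij]
  unfold specRad
  rw [he]

private lemma stmt9_adjMatrix_isHermitian (G : SimpleGraph V) [DecidableRel G.Adj] :
    (G.adjMatrix ℝ).IsHermitian := by
  rw [Matrix.IsHermitian]
  ext i j
  simp [Matrix.conjTranspose_apply, SimpleGraph.adj_comm]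

private lemma stmt9_le_specRad_of_eig (G : SimpleGraph V) [Nonempty V] [DecidableRel G.Adj] :
    (univ.sup' univ_nonempty (stmt9_adjMatrix_isHermitian G).eigenvalues) ≤ specRad G := by
  obtain ⟨i, _, hi⟩ := Finset.exists_mem_eq_sup' (univ_nonempty (α := V))
    (stmt9_adjMatrix_isHermitian G).eigenvalues
  rw [hi, stmt9_specRad_eq]
  exact le_csSup ((G.adjMatrix ℝ).finite_spectrum.bddAbove)
    ((stmt9_adjMatrix_isHermitian G).eigenvalues_mem_spectrum_real i)

private lemma stmt9_graph_rayleigh (G : SimpleGraph V) [Nonempty V] [DecidableRel G.Adj]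
    (x : V → ℝ) :
    ∑ p ∈ univ ×ˢ univ, (G.adjMatrix ℝ) p.1 p.2 * (x p.1 * x p.2)
      ≤ specRad G * ∑ u, x u ^ 2 := by
  have h1 : ∑ p ∈ univ ×ˢ univ, (G.adjMatrix ℝ) p.1 p.2 * (x p.1 * x p.2)
      = x ⬝ᵥ ((G.adjMatrix ℝ) *ᵥ x) := by
    rw [Finset.sum_product]
    simp only [dotProduct, Matrix.mulVec, dotProduct]
    exact Finset.sum_congr rfl fun u _ => by
      rw [Finset.mul_sum]
      exact Finset.sum_congr rfl fun w _ => by ring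
  have h2 : x ⬝ᵥ x = ∑ u, x u ^ 2 := by
    simp [dotProduct, pow_two]
  calc ∑ p ∈ univ ×ˢ univ, (G.adjMatrix ℝ) p.1 p.2 * (x p.1 * x p.2)
      = x ⬝ᵥ ((G.adjMatrix ℝ) *ᵥ x) := h1
    _ ≤ (univ.sup' univ_nonempty (stmt9_adjMatrix_isHermitian G).eigenvalues) * (x ⬝ᵥ x) :=
        stmt9_quadform_le_max _ _ x
    _ ≤ specRad G * ∑ u, x u ^ 2 := by
        rw [h2]
        apply mul_le_mul_of_nonneg_right (stmt9_le_specRad_of_eig G)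
        exact Finset.sum_nonneg fun u _ => sq_nonneg _

private lemma stmt9_rayleigh_lower (G : SimpleGraph V) [Nonempty V] [DecidableRel G.Adj]
    (x : V → ℝ) (hx : ∀ v, 0 ≤ x v) (T : Finset (V × V)) (hT : ∀ p ∈ T, G.Adj p.1 p.2) :
    ∑ p ∈ T, x p.1 * x p.2 ≤ specRad G * ∑ u, x u ^ 2 := by
  refine le_trans ?_ (stmt9_graph_rayleigh G x)
  have h1 : ∑ p ∈ T, x p.1 * x p.2 = ∑ p ∈ T, (G.adjMatrix ℝ) p.1 p.2 * (x p.1 * x p.2) := by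
    refine Finset.sum_congr rfl fun p hp => ?_
    rw [SimpleGraph.adjMatrix_apply, if_pos (hT p hp), one_mul]
  rw [h1]
  refine Finset.sum_le_sum_of_subset_of_nonneg (fun p _ => Finset.mem_product.mpr
    ⟨Finset.mem_univ _, Finset.mem_univ _⟩) fun p _ _ => ?_
  rcases Classical.em (G.Adj p.1 p.2) with h | h
  · rw [SimpleGraph.adjMatrix_apply, if_pos h, one_mul]
    exact mul_nonneg (hx _) (hx _)
  · rw [SimpleGraph.adjMatrix_apply, if_neg h, zero_mul]

private lemma stmt9_cut_quad_ineq (G : SimpleGraph V) [Nonempty V] [DecidableRel G.Adj]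
    (V₁ : Finset V) (h1 : V₁.Nonempty) (h2 : V₁ᶜ.Nonempty) (tR : ℝ) (htR : 0 ≤ tR)
    (hμ : specRad Gᶜ ≤ Real.sqrt tR) :
    ((((V₁ ×ˢ V₁ᶜ).filter fun p => Gᶜ.Adj p.1 p.2).card : ℝ))^2
      ≤ tR * (V₁.card * V₁ᶜ.card) := by
  classical
  set n₁ := V₁.card with hn₁
  set n₂ := V₁ᶜ.card with hn₂
  set E := (V₁ ×ˢ V₁ᶜ).filter fun p => Gᶜ.Adj p.1 p.2 with hE
  set E' := (V₁ᶜ ×ˢ V₁).filter fun p => Gᶜ.Adj p.1 p.2 with hE'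
  set x : V → ℝ := fun u => if u ∈ V₁ then Real.sqrt n₂ else Real.sqrt n₁ with hxdef
  have hx : ∀ v, 0 ≤ x v := by
    intro v; rw [hxdef]; dsimp only
    split <;> exact Real.sqrt_nonneg _
  have hTadj : ∀ p ∈ E ∪ E', Gᶜ.Adj p.1 p.2 := by
    intro p hp
    rcases Finset.mem_union.mp hp with h | h
    · exact (Finset.mem_filter.mp h).2
    · exact (Finset.mem_filter.mp h).2
  have hmain := stmt9_rayleigh_lower Gᶜ x hx (E ∪ E') hTadj
  have hcards : E'.card = E.card := by
    apply Finset.card_bij (fun p _ => (p.2, p.1))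
    · intro p hp
      obtain ⟨hp1, hp2⟩ := Finset.mem_filter.mp hp
      obtain ⟨ha, hb⟩ := Finset.mem_product.mp hp1
      exact Finset.mem_filter.mpr ⟨Finset.mem_product.mpr ⟨hb, ha⟩,
        ((Finset.mem_filter.mp hp).2).symm⟩
    · intro p hp q hq hpq
      exact Prod.ext (congrArg Prod.snd hpq) (congrArg Prod.fst hpq)
    · intro p hp
      obtain ⟨hp1, hp2⟩ := Finset.mem_filter.mp hp
      obtain ⟨ha, hb⟩ := Finset.mem_product.mp hp1
      exact ⟨(p.2, p.1), Finset.mem_filter.mpr ⟨Finset.mem_product.mpr ⟨hb, ha⟩, hp2.symm⟩, rfl⟩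
  have hdisj : Disjoint E E' := by
    rw [Finset.disjoint_left]
    intro p hp hp'
    have h1' := (Finset.mem_product.mp (Finset.mem_filter.mp hp).1).1
    have h2' := (Finset.mem_product.mp (Finset.mem_filter.mp hp').1).1
    exact (Finset.mem_compl.mp h2') h1'
  have hsum : ∑ p ∈ E ∪ E', x p.1 * x p.2
      = (2 * E.card : ℝ) * (Real.sqrt n₁ * Real.sqrt n₂) := by
    have hconst : ∀ p ∈ E ∪ E', x p.1 * x p.2 = Real.sqrt n₁ * Real.sqrt n₂ := by
      intro p hp
      rcases Finset.mem_union.mp hp with h | h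
      · obtain ⟨ha, hb⟩ := Finset.mem_product.mp (Finset.mem_filter.mp h).1
        rw [hxdef]; dsimp only
        rw [if_pos ha, if_neg (Finset.mem_compl.mp hb), mul_comm]
      · obtain ⟨ha, hb⟩ := Finset.mem_product.mp (Finset.mem_filter.mp h).1
        rw [hxdef]; dsimp only
        rw [if_neg (Finset.mem_compl.mp ha), if_pos hb]
    rw [Finset.sum_congr rfl hconst, Finset.sum_const, Finset.card_union_of_disjoint hdisj,
      hcards, nsmul_eq_mul]
    push_cast
    ring
  have hsq : ∑ u, x u ^ 2 = 2 * (n₁ * n₂ : ℝ) := by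
    rw [← Finset.sum_add_sum_compl V₁]
    have e1 : ∀ u ∈ V₁, x u ^ 2 = (n₂ : ℝ) := by
      intro u hu; rw [hxdef]; dsimp only
      rw [if_pos hu, Real.sq_sqrt (by positivity)]
    have e2 : ∀ u ∈ V₁ᶜ, x u ^ 2 = (n₁ : ℝ) := by
      intro u hu; rw [hxdef]; dsimp only
      rw [if_neg (Finset.mem_compl.mp hu), Real.sq_sqrt (by positivity)]
    rw [Finset.sum_congr rfl e1, Finset.sum_congr rfl e2, Finset.sum_const, Finset.sum_const]
    ring
  rw [hsum, hsq] at hmain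
  have hP : (0:ℝ) < n₁ * n₂ := by
    have := h1.card_pos; have := h2.card_pos; positivity
  have hq : (0:ℝ) < Real.sqrt n₁ * Real.sqrt n₂ := by
    have := h1.card_pos; have := h2.card_pos
    apply mul_pos <;> exact Real.sqrt_pos.mpr (by positivity)
  have hsr : specRad Gᶜ * (2 * (n₁*n₂:ℝ)) ≤ Real.sqrt tR * (2*(n₁*n₂:ℝ)) :=
    mul_le_mul_of_nonneg_right hμ (by positivity)
  have key : (E.card : ℝ) * (Real.sqrt n₁ * Real.sqrt n₂) ≤ Real.sqrt tR * (n₁ * n₂) := by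
    nlinarith [hmain, hsr]
  have hsq1 : (Real.sqrt n₁ * Real.sqrt n₂)^2 = (n₁ * n₂ : ℝ) := by
    rw [mul_pow, Real.sq_sqrt (by positivity), Real.sq_sqrt (by positivity)]
  have hsqt : (Real.sqrt tR)^2 = tR := Real.sq_sqrt htR
  have hle : (E.card : ℝ) ≤ Real.sqrt tR * (Real.sqrt n₁ * Real.sqrt n₂) := by
    apply le_of_mul_le_mul_right _ hq
    rw [← hsq1] at key
    calc (E.card : ℝ) * (Real.sqrt n₁ * Real.sqrt n₂)
        ≤ Real.sqrt tR * (Real.sqrt n₁ * Real.sqrt n₂)^2 := key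
      _ = Real.sqrt tR * (Real.sqrt n₁ * Real.sqrt n₂) * (Real.sqrt n₁ * Real.sqrt n₂) := by
          ring
  calc ((E.card : ℝ))^2 ≤ (Real.sqrt tR * (Real.sqrt n₁ * Real.sqrt n₂))^2 := by
        apply pow_le_pow_left₀ (by positivity) hle
    _ = tR * (n₁ * n₂) := by rw [mul_pow, hsqt, hsq1]
private lemma stmt9_pendant_structure (G : SimpleGraph V) [Nonempty V] (n k : ℕ)
    (hcard : Fintype.card V = n) (hn : 2*k+1 ≤ n) (hk : 1 ≤ k)
    (v : V) (hdeg : (Gᶜ.neighborSet v).ncard = n - k - 1)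
    (hμ : specRad Gᶜ ≤ Real.sqrt ((n:ℝ) - k - 1)) :
    ∀ z w, Gᶜ.Adj v z → Gᶜ.Adj z w → w = v := by
  classical
  intro z w hvz hzw
  by_contra hwv
  set X : Finset V := Gᶜ.neighborFinset v with hXdef
  have hXcard : X.card = n - k - 1 := by
    rw [hXdef, SimpleGraph.neighborFinset_def, ← Set.ncard_eq_toFinset_card']
    exact hdeg
  have hkn : k + 2 ≤ n := by omega
  have hΔcast : ((n - k - 1 : ℕ) : ℝ) = (n:ℝ) - k - 1 := by
    rw [Nat.cast_sub (by omega : 1 ≤ n - k), Nat.cast_sub (by omega : k ≤ n), Nat.cast_one]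
  set Δ : ℝ := (n:ℝ) - k - 1 with hΔdef
  have hΔ1 : (1:ℝ) ≤ Δ := by
    have h1 : (2*k+1 : ℝ) ≤ (n:ℝ) := by exact_mod_cast hn
    have h2 : (1:ℝ) ≤ (k:ℝ) := by exact_mod_cast hk
    simp only [hΔdef]; linarith
  set r : ℝ := Real.sqrt Δ with hrdef
  have hr2 : r^2 = Δ := Real.sq_sqrt (by linarith)
  have hrpos : 0 < r := Real.sqrt_pos.mpr (by linarith)
  have hvX : v ∉ X := by simp [hXdef]
  have hzX : z ∈ X := by simp [hXdef, hvz]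
  have hzv : z ≠ v := fun h => (Gᶜ.loopless.irrefl v) (h ▸ hvz)
  have hzw' : z ≠ w := hzw.ne
  -- the test vector
  set x : V → ℝ := fun u => if u = v then r else if u ∈ X then 1 else if u = w then 1/r else 0
    with hxdef
  have hx : ∀ u, 0 ≤ x u := by
    intro u; simp only [hxdef]
    split
    · linarith
    · split
      · norm_num
      · split
        · positivity
        · exact le_refl 0
  have hxv : x v = r := by simp [hxdef]
  have hxX : ∀ u ∈ X, x u = 1 := by
    intro u hu
    have : u ≠ v := fun h => hvX (h ▸ hu)
    simp [hxdef, this, hu]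
  -- the pair set
  set T : Finset (V × V) := (({v} ×ˢ X) ∪ (X ×ˢ {v})) ∪ {(z,w),(w,z)} with hTdef
  have hT : ∀ p ∈ T, Gᶜ.Adj p.1 p.2 := by
    intro p hp
    simp only [hTdef, Finset.mem_union, Finset.mem_product, Finset.mem_singleton,
      Finset.mem_insert] at hp
    rcases hp with (⟨h1, h2⟩ | ⟨h1, h2⟩) | (h | h)
    · rw [h1]; rw [hXdef] at h2; exact (SimpleGraph.mem_neighborFinset _ _ _).mp h2
    · rw [h2]; rw [hXdef] at h1
      exact ((SimpleGraph.mem_neighborFinset _ _ _).mp h1).symm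
    · rw [h]; exact hzw
    · rw [h]; exact hzw.symm
  have hd1 : Disjoint ({v} ×ˢ X) (X ×ˢ {v}) := by
    rw [Finset.disjoint_left]
    rintro ⟨a, b⟩ hab hab'
    simp only [Finset.mem_product, Finset.mem_singleton] at hab hab'
    exact hvX (hab.1 ▸ hab'.1)
  have hd2 : Disjoint (({v} ×ˢ X) ∪ (X ×ˢ {v})) ({(z,w),(w,z)} : Finset (V × V)) := by
    rw [Finset.disjoint_right]
    rintro ⟨a, b⟩ hab hab'
    simp only [Finset.mem_insert, Finset.mem_singleton, Prod.mk.injEq] at hab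
    simp only [Finset.mem_union, Finset.mem_product, Finset.mem_singleton] at hab'
    rcases hab with ⟨ha, hb⟩ | ⟨ha, hb⟩
    · rcases hab' with ⟨h1, _⟩ | ⟨_, h2⟩
      · exact hzv (ha ▸ h1)
      · exact hwv (hb ▸ h2)
    · rcases hab' with ⟨h1, _⟩ | ⟨_, h2⟩
      · exact hwv (ha ▸ h1)
      · exact hzv (hb ▸ h2)
  have hsumT : ∑ p ∈ T, x p.1 * x p.2 = 2 * ((n-k-1 : ℕ) : ℝ) * r + 2 * (1 * x w) := by
    rw [hTdef, Finset.sum_union hd2, Finset.sum_union hd1]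
    have e1 : ∑ p ∈ ({v} ×ˢ X), x p.1 * x p.2 = ((n-k-1 : ℕ) : ℝ) * r := by
      rw [Finset.sum_product, Finset.sum_singleton]
      rw [Finset.sum_congr rfl (fun u hu => by rw [hxv, hxX u hu, mul_one])]
      rw [Finset.sum_const, hXcard, nsmul_eq_mul]
    have e2 : ∑ p ∈ (X ×ˢ {v}), x p.1 * x p.2 = ((n-k-1 : ℕ) : ℝ) * r := by
      rw [Finset.sum_product]
      rw [Finset.sum_congr rfl (fun u hu => by
        rw [Finset.sum_singleton, hxv, hxX u hu, one_mul])]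
      rw [Finset.sum_const, hXcard, nsmul_eq_mul]
    have e3 : ∑ p ∈ ({(z,w),(w,z)} : Finset (V × V)), x p.1 * x p.2 = 2 * (1 * x w) := by
      have hne : ((z,w) : V × V) ≠ (w,z) :=
        fun h => hzw' (congrArg Prod.fst h)
      rw [Finset.sum_insert (by simp only [Finset.mem_singleton]; exact hne), Finset.sum_singleton]
      rw [hxX z hzX]
      ring
    rw [e1, e2, e3]; ring
  have hvXw : v ∉ X ∪ ({w} : Finset V) := by
    simp only [Finset.mem_union, Finset.mem_singleton]
    push_neg
    exact ⟨hvX, fun h => hwv h.symm⟩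
  have hsupp : ∀ u ∈ (univ : Finset V), u ∉ insert v (X ∪ {w}) → x u ^ 2 = 0 := by
    intro u _ hu
    simp only [Finset.mem_insert, Finset.mem_union, Finset.mem_singleton] at hu
    push_neg at hu
    simp [hxdef, hu.1, hu.2.1, hu.2.2]
  have hsumsq : ∑ u, x u ^ 2 = r^2 + (∑ u ∈ X ∪ {w}, x u ^ 2) := by
    rw [← Finset.sum_subset (Finset.subset_univ (insert v (X ∪ {w}))) hsupp]
    rw [Finset.sum_insert hvXw, hxv]
  have hray := stmt9_rayleigh_lower Gᶜ x hx T hT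
  have hspec : specRad Gᶜ ≤ r := hμ
  have hsum_nonneg : 0 ≤ ∑ u, x u ^ 2 := Finset.sum_nonneg fun u _ => sq_nonneg _
  have hray2 : ∑ p ∈ T, x p.1 * x p.2 ≤ r * ∑ u, x u ^ 2 :=
    le_trans hray (mul_le_mul_of_nonneg_right hspec hsum_nonneg)
  have hXsum : ∑ u ∈ X, x u ^ 2 = ((n-k-1:ℕ) : ℝ) := by
    rw [Finset.sum_congr rfl (fun u hu => by rw [hxX u hu, one_pow]), Finset.sum_const,
      hXcard, nsmul_eq_mul, mul_one]
  by_cases hwX : w ∈ X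
  · have hXw : X ∪ ({w} : Finset V) = X := by
      apply Finset.union_eq_left.mpr
      simpa using hwX
    rw [hsumT, hsumsq, hXw, hXsum, hΔcast] at hray2
    rw [hxX w hwX] at hray2
    rw [hr2] at hray2
    nlinarith [hray2]
  · have hxw : x w = 1/r := by
      simp [hxdef, hwv, hwX]
    have hdxw : Disjoint X ({w} : Finset V) := by
      simp [Finset.disjoint_singleton_right, hwX]
    have : ∑ u ∈ X ∪ {w}, x u ^ 2 = ((n-k-1:ℕ):ℝ) + (1/r)^2 := by
      rw [Finset.sum_union hdxw, hXsum, Finset.sum_singleton, hxw]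
    rw [hsumT, hsumsq, this, hΔcast, hxw, hr2] at hray2
    have hinv : r * (1/r)^2 = 1/r := by
      field_simp
    have hexp : r * (Δ + (Δ + (1/r)^2)) = 2*Δ*r + 1/r := by
      rw [mul_add, mul_add, hinv]; ring
    rw [hexp] at hray2
    have h2r : 2 * (1 * (1/r)) = 2/r := by ring
    rw [h2r] at hray2
    have : 2/r ≤ 1/r := by linarith
    have hc : (1:ℝ)/r > 0 := by positivity
    linarith

private lemma stmt9_deg_eq_degree (G : SimpleGraph V) [DecidableRel G.Adj] (v : V) :
    deg G v = G.degree v := by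
  rw [deg, SimpleGraph.degree, SimpleGraph.neighborFinset_def, ← Set.ncard_eq_toFinset_card']

private lemma stmt9_exists_cut (G : SimpleGraph V) [DecidableRel G.Adj] (hconn : G.Connected) (s : ℕ)
    (h2 : 2 ≤ Fintype.card V) (hns : ¬ SEdgeConnected s G) :
    ∃ V₁ : Finset V, V₁.Nonempty ∧ V₁ᶜ.Nonempty ∧
      (1 ≤ ((V₁ ×ˢ V₁ᶜ).filter fun p => G.Adj p.1 p.2).card) ∧
      (((V₁ ×ˢ V₁ᶜ).filter fun p => G.Adj p.1 p.2).card + 1 ≤ s) ∧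
      (∀ a ∈ V₁, G.degree a + 1 ≤ V₁.card + ((V₁ ×ˢ V₁ᶜ).filter fun p => G.Adj p.1 p.2).card) ∧
      (∀ a ∈ V₁ᶜ, G.degree a + 1 ≤ V₁ᶜ.card + ((V₁ ×ˢ V₁ᶜ).filter fun p => G.Adj p.1 p.2).card) := by
  classical
  rw [SEdgeConnected] at hns
  push_neg at hns
  obtain ⟨F, hFsub, hFcard, hFdisc⟩ := hns h2
  have : Nonempty V := Fintype.card_pos_iff.mp (by omega)
  set H := G.deleteEdges ↑F with hH
  rw [SimpleGraph.connected_iff] at hFdisc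
  push_neg at hFdisc
  have hnp : ¬ H.Preconnected := fun h => @IsEmpty.false V (hFdisc h) this.some
  rw [SimpleGraph.Preconnected] at hnp
  push_neg at hnp
  obtain ⟨u, w, huw⟩ := hnp
  set V₁ : Finset V := univ.filter (fun a => H.Reachable u a) with hV₁
  have huV₁ : u ∈ V₁ := by
    rw [hV₁, Finset.mem_filter]
    exact ⟨Finset.mem_univ _, SimpleGraph.Reachable.refl u⟩
  have hwV₁ : w ∈ V₁ᶜ := by simp [hV₁, huw]
  set cross := (V₁ ×ˢ V₁ᶜ).filter fun p => G.Adj p.1 p.2 with hcross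
  have hmemF : ∀ p ∈ cross, s(p.1, p.2) ∈ F := by
    rintro ⟨a, b⟩ hp
    obtain ⟨hab, hadj⟩ := Finset.mem_filter.mp hp
    obtain ⟨ha, hb⟩ := Finset.mem_product.mp hab
    by_contra hniF
    have : H.Adj a b := by
      rw [hH, SimpleGraph.deleteEdges_adj]
      exact ⟨hadj, hniF⟩
    have hra : H.Reachable u a := by
      have := Finset.mem_filter.mp ha; exact this.2
    have : H.Reachable u b := hra.trans this.reachable
    have := Finset.mem_compl.mp hb
    simp [hV₁] at this
    exact this ‹H.Reachable u b›
  have hcle : cross.card ≤ F.card := by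
    apply Finset.card_le_card_of_injOn (fun p => s(p.1, p.2))
      (fun p hp => Finset.mem_coe.mpr (hmemF p (Finset.mem_coe.mp hp)))
    rintro ⟨a, b⟩ hp ⟨a', b'⟩ hp' heq
    obtain ⟨hab, -⟩ := Finset.mem_filter.mp hp
    obtain ⟨ha, hb⟩ := Finset.mem_product.mp hab
    obtain ⟨hab', -⟩ := Finset.mem_filter.mp hp'
    obtain ⟨ha', hb'⟩ := Finset.mem_product.mp hab'
    rw [Sym2.eq_iff] at heq
    rcases heq with ⟨h1, h2⟩ | ⟨h1, h2⟩
    · exact Prod.ext h1 h2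
    · exact absurd (h1 ▸ ha) (Finset.mem_compl.mp hb')
  have hc1 : 1 ≤ cross.card := by
    have hreach : G.Reachable u w := hconn.preconnected u w
    obtain ⟨p⟩ := hreach
    obtain ⟨d, -, hd1, hd2⟩ := p.exists_boundary_dart (↑V₁ : Set V) (by exact_mod_cast huV₁)
      (by simpa using (Finset.mem_compl.mp hwV₁))
    have : (d.fst, d.snd) ∈ cross := by
      rw [hcross, Finset.mem_filter, Finset.mem_product]
      exact ⟨⟨by exact_mod_cast hd1, Finset.mem_compl.mpr (by exact_mod_cast hd2)⟩, d.adj⟩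
    exact Finset.card_pos.mpr ⟨_, this⟩
  have hdeg1 : ∀ a ∈ V₁, G.degree a + 1 ≤ V₁.card + cross.card := by
    intro a ha
    have hsub : G.neighborFinset a ⊆ V₁.erase a ∪ (V₁ᶜ.filter (G.Adj a ·)) := by
      intro b hb
      rw [SimpleGraph.mem_neighborFinset] at hb
      by_cases hbV : b ∈ V₁
      · exact Finset.mem_union_left _ (Finset.mem_erase.mpr ⟨hb.ne', hbV⟩)
      · exact Finset.mem_union_right _ (Finset.mem_filter.mpr ⟨Finset.mem_compl.mpr hbV, hb⟩)
    have h1 : G.degree a ≤ (V₁.erase a).card + (V₁ᶜ.filter (G.Adj a ·)).card :=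
      le_trans (Finset.card_le_card hsub) (Finset.card_union_le _ _)
    have h2 : (V₁ᶜ.filter (G.Adj a ·)).card ≤ cross.card := by
      apply Finset.card_le_card_of_injOn (fun b => (a, b))
      · intro b hb
        obtain ⟨hb1, hb2⟩ := Finset.mem_filter.mp hb
        exact Finset.mem_filter.mpr ⟨Finset.mem_product.mpr ⟨ha, hb1⟩, hb2⟩
      · intro b _ b' _ h
        exact congrArg Prod.snd h
    have h3 : (V₁.erase a).card = V₁.card - 1 := Finset.card_erase_of_mem ha
    have h4 : 1 ≤ V₁.card := Finset.card_pos.mpr ⟨a, ha⟩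
    omega
  have hdeg2 : ∀ a ∈ V₁ᶜ, G.degree a + 1 ≤ V₁ᶜ.card + cross.card := by
    intro a ha
    have hsub : G.neighborFinset a ⊆ V₁ᶜ.erase a ∪ (V₁.filter (G.Adj a ·)) := by
      intro b hb
      rw [SimpleGraph.mem_neighborFinset] at hb
      by_cases hbV : b ∈ V₁
      · exact Finset.mem_union_right _ (Finset.mem_filter.mpr ⟨hbV, hb⟩)
      · exact Finset.mem_union_left _ (Finset.mem_erase.mpr ⟨hb.ne', Finset.mem_compl.mpr hbV⟩)
    have h1 : G.degree a ≤ (V₁ᶜ.erase a).card + (V₁.filter (G.Adj a ·)).card :=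
      le_trans (Finset.card_le_card hsub) (Finset.card_union_le _ _)
    have h2 : (V₁.filter (G.Adj a ·)).card ≤ cross.card := by
      apply Finset.card_le_card_of_injOn (fun b => (b, a))
      · intro b hb
        obtain ⟨hb1, hb2⟩ := Finset.mem_filter.mp hb
        exact Finset.mem_filter.mpr ⟨Finset.mem_product.mpr ⟨hb1, ha⟩, hb2.symm⟩
      · intro b _ b' _ h
        exact congrArg Prod.fst h
    have h3 : (V₁ᶜ.erase a).card = V₁ᶜ.card - 1 := Finset.card_erase_of_mem ha
    have h4 : 1 ≤ V₁ᶜ.card := Finset.card_pos.mpr ⟨a, ha⟩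
    omega
  have hc2 : cross.card + 1 ≤ s := by omega
  exact ⟨V₁, ⟨u, huV₁⟩, ⟨w, hwV₁⟩, hc1, hc2, hdeg1, hdeg2⟩

private lemma stmt9_memEC_of_pendant (G : SimpleGraph V) [DecidableRel G.Adj] (n k : ℕ)
    (hcard : Fintype.card V = n) (hkn : k + 2 ≤ n)
    (v : V) (hdeg : Gᶜ.degree v = n - k - 1)
    (hpend : ∀ z w, Gᶜ.Adj v z → Gᶜ.Adj z w → w = v) :
    MemEC n k (k+1) G := by
  classical
  set X : Finset V := Gᶜ.neighborFinset v with hXdef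
  set Y : Finset V := {v} with hYdef
  set S : Finset V := (X ∪ Y)ᶜ with hSdef
  have hvX : v ∉ X := by simp [hXdef]
  have hXmem : ∀ {a}, a ∈ X ↔ Gᶜ.Adj v a := by
    intro a; simp [hXdef]
  set G₁ : SimpleGraph V :=
    { Adj := fun a b => (a = v ∧ b ∈ X) ∨ (b = v ∧ a ∈ X)
      symm := ⟨by
        rintro a b (⟨h1, h2⟩ | ⟨h1, h2⟩)
        · exact Or.inr ⟨h1, h2⟩
        · exact Or.inl ⟨h1, h2⟩⟩
      loopless := ⟨by
        rintro a (⟨h1, h2⟩ | ⟨h1, h2⟩) <;> exact hvX (h1 ▸ h2)⟩ } with hG₁def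
  have hG₁adj : ∀ {a b}, G₁.Adj a b ↔ ((a = v ∧ b ∈ X) ∨ (b = v ∧ a ∈ X)) := by
    intro a b; rw [hG₁def]
  have hXcard : X.card = n - k - 1 := hcard ▸ hdeg
  have hdisjXY : Disjoint X Y := by
    simp [hYdef, Finset.disjoint_singleton_right, hvX]
  have hG₁sub : ∀ {a b}, G₁.Adj a b → Gᶜ.Adj a b := by
    intro a b hab
    rcases hG₁adj.mp hab with ⟨h1, h2⟩ | ⟨h1, h2⟩
    · exact h1 ▸ hXmem.mp h2
    · exact h1 ▸ (hXmem.mp h2).symm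
  refine ⟨0, X, Y, S, G₁, hdisjXY, ?_, ?_, ?_, ?_, ?_, ?_, ?_, ?_, ?_, ?_⟩
  · rw [hSdef]
    exact disjoint_compl_right.mono_left Finset.subset_union_left
  · rw [hSdef]
    exact disjoint_compl_right.mono_left Finset.subset_union_right
  · rw [hSdef]
    exact Finset.union_compl _
  · -- S.card = (k+1) - 1 - 0 = k
    have h1 : (X ∪ Y).card = n - k := by
      rw [Finset.card_union_of_disjoint hdisjXY, hXcard, hYdef, Finset.card_singleton]
      omega
    have h2 : S.card = n - (n - k) := by
      rw [hSdef, Finset.card_compl, h1, hcard]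
    have : S.card = k := by omega
    rw [this]; push_cast; ring
  · have h1 : X.card + Y.card = n - k := by
      rw [hXcard, hYdef, Finset.card_singleton]; omega
    have h2 : ((X.card : ℤ)) + Y.card = ((n - k : ℕ) : ℤ) := by exact_mod_cast congrArg (Nat.cast (R := ℤ)) h1
    rw [h2, Nat.cast_sub (by omega)]
    push_cast; ring
  · intro a b hab
    rcases hG₁adj.mp hab with ⟨h1, h2⟩ | ⟨h1, h2⟩
    · exact Or.inr ⟨by simp [hYdef, h1], h2⟩
    · exact Or.inl ⟨h2, by simp [hYdef, h1]⟩
  · -- deg G₁ u = 1 for u in X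
    intro u hu
    have hune : u ≠ v := fun h => hvX (h ▸ hu)
    have : G₁.neighborSet u = {v} := by
      ext b
      simp only [SimpleGraph.mem_neighborSet, Set.mem_singleton_iff]
      constructor
      · intro hb
        rcases hG₁adj.mp hb with ⟨h1, h2⟩ | ⟨h1, h2⟩
        · exact absurd h1 hune
        · exact h1
      · intro hb
        exact hG₁adj.mpr (Or.inr ⟨hb, hu⟩)
    rw [deg, this, Set.ncard_singleton]
    push_cast; ring
  · -- deg G₁ v = n - k - 1 for Y = {v}
    intro u hu
    rw [hYdef, Finset.mem_singleton] at hu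
    have : G₁.neighborSet v = ↑X := by
      ext b
      constructor
      · intro hb
        have hb' : G₁.Adj v b := hb
        rcases hG₁adj.mp hb' with ⟨h1, h2⟩ | ⟨h1, h2⟩
        · exact Finset.mem_coe.mpr h2
        · exact absurd (h1 ▸ hb') (G₁.loopless.irrefl v)
      · intro hb
        exact hG₁adj.mpr (Or.inl ⟨rfl, Finset.mem_coe.mp hb⟩)
    rw [hu, deg, this, Set.ncard_coe_finset, hXcard]
    rw [Nat.cast_sub (by omega), Nat.cast_sub (by omega)]
    push_cast; ring
  · -- join between X ∪ Y and S
    intro a ha b hb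
    rw [hSdef, Finset.mem_compl] at hb
    have hbv : b ≠ v := by
      intro h; subst h
      exact hb (Finset.mem_union_right _ (by simp [hYdef]))
    have hbX : b ∉ X := fun h => hb (Finset.mem_union_left _ h)
    rcases Finset.mem_union.mp ha with haX | haY
    · -- a ∈ X: neighbors of a in Gᶜ only v
      have hne : a ≠ b := by
        intro h; subst h; exact hbX haX
      by_contra hnadj
      have : Gᶜ.Adj a b := (G.compl_adj a b).mpr ⟨hne, hnadj⟩
      have := hpend a b (hXmem.mp haX) this
      exact hbv this
    · rw [hYdef, Finset.mem_singleton] at haY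
      subst haY
      by_contra hnadj
      have : Gᶜ.Adj a b := (G.compl_adj a b).mpr ⟨fun h => hbv h.symm, hnadj⟩
      exact hbX (hXmem.mpr this)
  · -- inside X ∪ Y : G = complement of G₁
    intro a ha b hb
    constructor
    · intro hadj
      refine ⟨hadj.ne, fun hG₁ => ?_⟩
      exact (G.compl_adj a b).mp (hG₁sub hG₁) |>.2 hadj
    · rintro ⟨hne, hnG₁⟩
      by_contra hnadj
      have hc : Gᶜ.Adj a b := (G.compl_adj a b).mpr ⟨hne, hnadj⟩
      rcases Finset.mem_union.mp ha with haX | haY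
      · rcases Finset.mem_union.mp hb with hbX | hbY
        · -- both in X: pendant says b = v, contradiction with v ∉ X
          have := hpend a b (hXmem.mp haX) hc
          exact hvX (this ▸ hbX)
        · rw [hYdef, Finset.mem_singleton] at hbY
          subst hbY
          exact hnG₁ (hG₁adj.mpr (Or.inr ⟨rfl, haX⟩))
      · rw [hYdef, Finset.mem_singleton] at haY
        subst haY
        have : b ∈ X := hXmem.mpr hc
        exact hnG₁ (hG₁adj.mpr (Or.inl ⟨rfl, this⟩))


private lemma stmt9_arith_contra_core (t c e P : ℝ) (ht : 0 ≤ t) (hc : 1 ≤ c) (hec : e + c = P)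
    (hPt : t + 2*c ≤ P) (hq : e^2 ≤ t*P) : False := by
  have he : t + c ≤ e := by linarith
  nlinarith [hq, he, hc, ht]

private lemma stmt9_arith_low (n k s n₁ n₂ c : ℝ) (hk : 1 ≤ k) (hs : 1 ≤ s) (hsk : s ≤ k)
    (hn : 2*k+1 ≤ n) (hsum : n₁ + n₂ = n) (h₁ : 1 ≤ n₁) (h₂ : 1 ≤ n₂)
    (hc1 : 1 ≤ c) (hcs : c + 1 ≤ s) (hd1 : k + 1 ≤ n₁ + c) (hd2 : k + 1 ≤ n₂ + c) :
    (k - s + 2)*(n - k - 1) + 2*c ≤ n₁ * n₂ := by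
  have hprod : 0 ≤ (n₁ - (k+1-c))*(n₂ - (k+1-c)) :=
    mul_nonneg (by linarith) (by linarith)
  nlinarith [hprod, mul_nonneg (show (0:ℝ) ≤ n - k - 1 by linarith)
      (show (0:ℝ) ≤ s - 1 - c by linarith),
    mul_nonneg (show (0:ℝ) ≤ c by linarith) (show (0:ℝ) ≤ k - 1 - c by linarith)]

private lemma stmt9_arith_high (n k c n₁ n₂ : ℝ) (hk : 1 ≤ k) (hn : 2*k+1 ≤ n)
    (hsum : n₁ + n₂ = n) (h₁ : 2 ≤ n₁) (h₂ : 2 ≤ n₂) (hck : c ≤ k)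
    (hcn : 2*c ≤ n + k - 3) :
    (n - k - 1) + 2*c ≤ n₁ * n₂ := by
  have hprod : 0 ≤ (n₁ - 2)*(n₂ - 2) := mul_nonneg (by linarith) (by linarith)
  nlinarith [hprod]

end Stmt9Aux

/-- Spectral condition of the complement for `s`-edge-connectivity. -/
theorem stmt_9 {V : Type*} [Fintype V] [DecidableEq V] (n k s : ℕ) (G : SimpleGraph V)
    (hs : 1 ≤ s) (hk : 1 ≤ k) (hks : (0 : ℤ) ≤ (k : ℤ) - s + 1) (hn : 2 * k + 1 ≤ n)
    (hcard : Fintype.card V = n) (hconn : G.Connected) (hδ : ∀ v : V, k ≤ deg G v)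
    (hμ : specRad Gᶜ ≤ Real.sqrt (((k : ℝ) - s + 2) * ((n : ℝ) - k - 1))) :
    SEdgeConnected s G ∨ MemEP n k G ∨ MemEC n k s G := by
  classical
  letI : DecidableRel G.Adj := Classical.decRel _
  have hV2 : 2 ≤ Fintype.card V := by omega
  have hne : Nonempty V := Fintype.card_pos_iff.mp (by omega)
  by_cases hsec : SEdgeConnected s G
  · exact Or.inl hsec
  obtain ⟨V₁, hV₁ne, hV₁cne, hc1, hcs, hdegb1, hdegb2⟩ := stmt9_exists_cut G hconn s hV2 hsec
  set c := ((V₁ ×ˢ V₁ᶜ).filter fun p => G.Adj p.1 p.2).card with hcdef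
  set e := ((V₁ ×ˢ V₁ᶜ).filter fun p => Gᶜ.Adj p.1 p.2).card with hedef
  set n₁ := V₁.card with hn₁def
  set n₂ := V₁ᶜ.card with hn₂def
  -- e + c = n₁ * n₂
  have hec : e + c = n₁ * n₂ := by
    have hfe : (V₁ ×ˢ V₁ᶜ).filter (fun p => Gᶜ.Adj p.1 p.2)
        = (V₁ ×ˢ V₁ᶜ).filter (fun p => ¬ G.Adj p.1 p.2) := by
      apply Finset.filter_congr
      intro p hp
      obtain ⟨h1, h2⟩ := Finset.mem_product.mp hp
      have hpne : p.1 ≠ p.2 := fun h => (Finset.mem_compl.mp h2) (h ▸ h1)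
      rw [SimpleGraph.compl_adj]
      exact and_iff_right hpne
    have := Finset.card_filter_add_card_filter_not
      (s := V₁ ×ˢ V₁ᶜ) (p := fun p => G.Adj p.1 p.2)
    rw [hedef, hfe, hcdef, hn₁def, hn₂def]
    rw [Finset.card_product] at this
    omega
  set tR : ℝ := ((k : ℝ) - s + 2) * ((n : ℝ) - k - 1) with htRdef
  have hks' : s ≤ k + 1 := by omega
  have hcast1 : (1:ℝ) ≤ (k:ℝ) - s + 2 := by
    have : (s:ℝ) ≤ (k:ℝ) + 1 := by exact_mod_cast hks'
    linarith
  have hcast2 : (1:ℝ) ≤ (n:ℝ) - k - 1 := by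
    have h1 : (2*k+1 : ℝ) ≤ (n:ℝ) := by exact_mod_cast hn
    have h2 : (1:ℝ) ≤ (k:ℝ) := by exact_mod_cast hk
    linarith
  have htR : 0 ≤ tR := by rw [htRdef]; nlinarith
  have hquad := stmt9_cut_quad_ineq G V₁ hV₁ne hV₁cne tR htR hμ
  -- degree bounds
  obtain ⟨a₁, ha₁⟩ := hV₁ne
  obtain ⟨a₂, ha₂⟩ := hV₁cne
  have hk1 : k + 1 ≤ n₁ + c := by
    have h1 := hδ a₁
    rw [stmt9_deg_eq_degree] at h1
    have h2 := hdegb1 a₁ ha₁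
    omega
  have hk2 : k + 1 ≤ n₂ + c := by
    have h1 := hδ a₂
    rw [stmt9_deg_eq_degree] at h1
    have h2 := hdegb2 a₂ ha₂
    omega
  have hsum : n₁ + n₂ = n := by
    rw [hn₁def, hn₂def, Finset.card_add_card_compl, hcard]
  have h1n₁ : 1 ≤ n₁ := Finset.card_pos.mpr ⟨a₁, ha₁⟩
  have h1n₂ : 1 ≤ n₂ := Finset.card_pos.mpr ⟨a₂, ha₂⟩
  -- the cast package
  have hecR : (e:ℝ) + c = (n₁:ℝ) * n₂ := by exact_mod_cast hec
  have hquadR : ((e:ℝ))^2 ≤ tR * ((n₁:ℝ) * n₂) := hquad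
  by_cases hsk : s ≤ k
  · exfalso
    have hPt : ((k:ℝ) - s + 2)*((n:ℝ) - k - 1) + 2*(c:ℝ) ≤ (n₁:ℝ) * n₂ := by
      apply stmt9_arith_low (n:ℝ) (k:ℝ) (s:ℝ) (n₁:ℝ) (n₂:ℝ) (c:ℝ)
      · exact_mod_cast hk
      · exact_mod_cast hs
      · exact_mod_cast hsk
      · exact_mod_cast hn
      · exact_mod_cast hsum
      · exact_mod_cast h1n₁
      · exact_mod_cast h1n₂
      · exact_mod_cast hc1
      · exact_mod_cast hcs
      · exact_mod_cast hk1
      · exact_mod_cast hk2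
    exact stmt9_arith_contra_core tR (c:ℝ) (e:ℝ) ((n₁:ℝ)*n₂) htR
      (by exact_mod_cast hc1) hecR (by rw [htRdef]; linarith) hquadR
  · -- s = k + 1
    have hseq : s = k + 1 := by omega
    have hck : c ≤ k := by omega
    have htR' : tR = (n:ℝ) - k - 1 := by
      rw [htRdef, hseq]
      push_cast
      ring
    -- one side is a singleton
    have hsing : n₁ = 1 ∨ n₂ = 1 := by
      by_contra hboth
      push_neg at hboth
      have h2n₁ : 2 ≤ n₁ := by omega
      have h2n₂ : 2 ≤ n₂ := by omega
      by_cases hcn : 2*c + 3 ≤ n + k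
      · have hPt : ((n:ℝ) - k - 1) + 2*(c:ℝ) ≤ (n₁:ℝ) * n₂ := by
          apply stmt9_arith_high (n:ℝ) (k:ℝ) (c:ℝ) (n₁:ℝ) (n₂:ℝ)
          · exact_mod_cast hk
          · exact_mod_cast hn
          · exact_mod_cast hsum
          · exact_mod_cast h2n₁
          · exact_mod_cast h2n₂
          · exact_mod_cast hck
          · have : (2*c+3 : ℝ) ≤ (n:ℝ) + k := by exact_mod_cast hcn
            linarith
        exact stmt9_arith_contra_core tR (c:ℝ) (e:ℝ) ((n₁:ℝ)*n₂) htR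
          (by exact_mod_cast hc1) hecR (by rw [htR']; linarith) hquadR
      · omega
    -- extract the low-degree vertex
    have hvdeg : ∃ v : V, G.degree v = k := by
      rcases hsing with h | h
      · obtain ⟨v, hv⟩ := Finset.card_eq_one.mp h
        refine ⟨v, ?_⟩
        have hvmem : v ∈ V₁ := by rw [hv]; exact Finset.mem_singleton_self v
        have hb := hdegb1 v hvmem
        have hδv := hδ v
        rw [stmt9_deg_eq_degree] at hδv
        omega
      · obtain ⟨v, hv⟩ := Finset.card_eq_one.mp h
        refine ⟨v, ?_⟩
        have hvmem : v ∈ V₁ᶜ := by rw [hv]; exact Finset.mem_singleton_self v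
        have hb := hdegb2 v hvmem
        have hδv := hδ v
        rw [stmt9_deg_eq_degree] at hδv
        omega
    obtain ⟨v, hvdeg⟩ := hvdeg
    have hGcdeg : Gᶜ.degree v = n - k - 1 := by
      rw [SimpleGraph.degree_compl, hcard, hvdeg]
      omega
    have hdeg' : (Gᶜ.neighborSet v).ncard = n - k - 1 := by
      have := stmt9_deg_eq_degree Gᶜ v
      rw [deg] at this
      rw [this, hGcdeg]
    have hμ' : specRad Gᶜ ≤ Real.sqrt ((n:ℝ) - k - 1) := by
      rw [← htR']
      exact hμ
    have hpend := stmt9_pendant_structure G n k hcard hn hk v hdeg' hμ'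
    right; right
    rw [hseq]
    exact stmt9_memEC_of_pendant G n k hcard (by omega) v hGcdeg hpend
end
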